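/- arXiv:2108.04054 — 3 statements merged into one kernel-verified Lean document; each statement's English description precedes it below -/
import Mathlib

section
/- Let the constraint value be C = 1/2 and let u be a bounded measurable strategy equal to a positive constant on [0, 1] and zero outside [0, 1]. Then for every bounded measurable strategy g supported in [0, 1] with mca(g) ≤ 1/2, one has wp(u; g) = (∫₀¹ u)(∫₀¹ g)(1 − 2·mca(g)) ≥ 0; in particular, any pair of strategies that are positive constants on [0, 1] and zero elsewhere is an equilibrium point of the bounded measurable game. -/
open MeasureTheory Set

/-- Mean competitive ability of a function supported in `[0, ∞)`:
`mca f = (∫₀^∞ t f(t) dt) / (∫₀^∞ f(t) dt)`. -/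
noncomputable def mca (f : ℝ → ℝ) : ℝ :=
  (∫ t in Ioi (0:ℝ), t * f t) / (∫ t in Ioi (0:ℝ), f t)

/-- Payoff of `f` against `g`:
`wp f g = ∫₀^∞ f(x) (∫₀ˣ g(t) dt − ∫ₓ^∞ g(t) dt) dx`. -/
noncomputable def wp (f g : ℝ → ℝ) : ℝ :=
  ∫ x in Ioi (0:ℝ), f x * ((∫ t in Ioc (0:ℝ) x, g t) - ∫ t in Ioi x, g t)

/-- A bounded measurable strategy: measurable, bounded, nonnegative, compactly
supported in `[0, ∞)`, and not almost everywhere zero. -/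
def IsStrategy (f : ℝ → ℝ) : Prop :=
  Measurable f ∧ (∃ Cb : ℝ, ∀ x, f x ≤ Cb) ∧ (∀ x, 0 ≤ f x) ∧
  (∃ R : ℝ, Function.support f ⊆ Icc 0 R) ∧ ¬ f =ᵐ[volume] (0 : ℝ → ℝ)

-- bounded measurable with support in Icc 0 R is integrable
lemma integrable_of_bdd_supp {h : ℝ → ℝ} (hm : Measurable h) (R B : ℝ)
    (hb : ∀ x ∈ Icc (0:ℝ) R, |h x| ≤ B) (hs : Function.support h ⊆ Icc 0 R) :
    Integrable h := by
  have : Integrable ((Icc (0:ℝ) R).indicator h) := by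
    rw [integrable_indicator_iff measurableSet_Icc]
    refine Integrable.mono' (integrable_const (max B 0)) hm.aestronglyMeasurable.restrict ?_
    rw [ae_restrict_iff' measurableSet_Icc]
    filter_upwards with x hx
    exact le_trans (hb x hx) (le_max_left _ _)
  rwa [indicator_eq_self.2 hs] at this

lemma strat_integrable {f : ℝ → ℝ} (hf : IsStrategy f) : Integrable f := by
  obtain ⟨hm, ⟨Cb, hCb⟩, hnn, ⟨R, hR⟩, _⟩ := hf
  exact integrable_of_bdd_supp hm R Cb
    (fun x _ => by rw [abs_of_nonneg (hnn x)]; exact hCb x) hR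

lemma strat_integrable_mul {f : ℝ → ℝ} (hf : IsStrategy f) :
    Integrable (fun t => t * f t) := by
  obtain ⟨hm, ⟨Cb, hCb⟩, hnn, ⟨R, hR⟩, _⟩ := hf
  refine integrable_of_bdd_supp (measurable_id.mul hm) R (R * Cb) (fun x hx => ?_) ?_
  · rw [abs_of_nonneg (mul_nonneg hx.1 (hnn x))]
    exact mul_le_mul hx.2 (hCb x) (hnn x) (le_trans hx.1 hx.2)
  · intro x hx
    have : f x ≠ 0 := by
      intro h0; apply hx; simp [Function.mem_support, h0]
    exact hR this

lemma strat_pos {f : ℝ → ℝ} (hf : IsStrategy f) : 0 < ∫ t in Ioi (0:ℝ), f t := by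
  obtain ⟨hm, hb, hnn, ⟨R, hR⟩, hne⟩ := hf
  have hint := strat_integrable ⟨hm, hb, hnn, ⟨R, hR⟩, hne⟩
  rcases lt_or_eq_of_le (setIntegral_nonneg measurableSet_Ioi (fun x _ => hnn x)) with h | h
  · exact h
  exfalso; apply hne
  have h0 : f =ᵐ[volume.restrict (Ioi (0:ℝ))] 0 := by
    rw [← integral_eq_zero_iff_of_nonneg (fun x => hnn x) hint.integrableOn]
    exact h.symm
  have h0' : ∀ᵐ x ∂volume.restrict (Ioi (0:ℝ)), f x = 0 := h0
  rw [ae_restrict_iff' measurableSet_Ioi] at h0'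
  have hne0 : ∀ᵐ x : ℝ ∂volume, x ≠ (0:ℝ) := by
    rw [ae_iff]
    simp only [ne_eq, not_not, setOf_eq_eq_singleton]
    exact Real.volume_singleton
  filter_upwards [h0', hne0] with x hx hx0
  rcases lt_trichotomy x 0 with h' | h' | h'
  · by_contra hfx
    exact absurd (hR hfx).1 (not_le.2 h')
  · exact absurd h' hx0
  · exact hx h'

section Unif
variable {U : ℝ → ℝ} {cU : ℝ}

lemma unif_eq_indicator (hc : ∀ x ∈ Icc (0:ℝ) 1, U x = cU)
    (h0 : ∀ x, x ∉ Icc (0:ℝ) 1 → U x = 0) :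
    U = (Icc (0:ℝ) 1).indicator (fun _ => cU) := by
  funext x
  by_cases hx : x ∈ Icc (0:ℝ) 1
  · rw [hc x hx, indicator_of_mem hx]
  · rw [h0 x hx, indicator_of_notMem hx]

lemma unif_G (hc : ∀ x ∈ Icc (0:ℝ) 1, U x = cU)
    (h0 : ∀ x, x ∉ Icc (0:ℝ) 1 → U x = 0) {x : ℝ} (hx : 0 < x) :
    ∫ t in Ioc (0:ℝ) x, U t = cU * min x 1 := by
  rw [unif_eq_indicator hc h0, setIntegral_indicator measurableSet_Icc]
  have : Ioc (0:ℝ) x ∩ Icc 0 1 = Ioc 0 (min x 1) := by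
    ext t
    simp only [mem_inter_iff, mem_Ioc, mem_Icc, lt_min_iff, le_min_iff]
    constructor
    · rintro ⟨⟨h1, h2⟩, _, h4⟩; exact ⟨h1, h2, h4⟩
    · rintro ⟨h1, h2, h3⟩; exact ⟨⟨h1, h2⟩, le_of_lt h1, h3⟩
  rw [this, setIntegral_const, measureReal_def, Real.volume_Ioc, smul_eq_mul]
  rw [ENNReal.toReal_ofReal (by rw [sub_zero]; exact le_min (le_of_lt hx) zero_le_one)]
  ring

lemma unif_tail (hc : ∀ x ∈ Icc (0:ℝ) 1, U x = cU)
    (h0 : ∀ x, x ∉ Icc (0:ℝ) 1 → U x = 0) {x : ℝ} (hx : 0 < x) :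
    ∫ t in Ioi x, U t = cU * (1 - min x 1) := by
  rw [unif_eq_indicator hc h0, setIntegral_indicator measurableSet_Icc]
  have : Ioi x ∩ Icc 0 1 = Ioc x 1 := by
    ext t
    simp only [mem_inter_iff, mem_Ioi, mem_Icc, mem_Ioc]
    constructor
    · rintro ⟨h1, _, h3⟩; exact ⟨h1, h3⟩
    · rintro ⟨h1, h2⟩; exact ⟨h1, le_of_lt (lt_trans hx h1), h2⟩
  rw [this, setIntegral_const, measureReal_def, Real.volume_Ioc, smul_eq_mul, ENNReal.toReal_ofReal']
  rcases le_total x 1 with h | h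
  · rw [min_eq_left h, max_eq_left (by linarith)]; ring
  · rw [min_eq_right h, max_eq_right (by linarith)]; ring

lemma wp_against_unif (f : ℝ → ℝ) (hc : ∀ x ∈ Icc (0:ℝ) 1, U x = cU)
    (h0 : ∀ x, x ∉ Icc (0:ℝ) 1 → U x = 0) :
    wp f U = ∫ x in Ioi (0:ℝ), f x * (cU * (2 * min x 1 - 1)) := by
  unfold wp
  refine setIntegral_congr_fun measurableSet_Ioi (fun x hx => ?_)
  rw [unif_G hc h0 hx, unif_tail hc h0 hx]
  ring
end Unif

lemma wp_unif_unif {U V : ℝ → ℝ} {cU cV : ℝ}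
    (hcU : ∀ x ∈ Icc (0:ℝ) 1, U x = cU) (h0U : ∀ x, x ∉ Icc (0:ℝ) 1 → U x = 0)
    (hcV : ∀ x ∈ Icc (0:ℝ) 1, V x = cV) (h0V : ∀ x, x ∉ Icc (0:ℝ) 1 → V x = 0) :
    wp U V = 0 := by
  rw [wp_against_unif U hcV h0V]
  have hz : ∀ x ∈ Ioi (0:ℝ) \ Ioc 0 1, U x * (cV * (2 * min x 1 - 1)) = 0 := by
    intro x hx
    have hx' : x ∉ Icc (0:ℝ) 1 := by
      simp only [mem_diff, mem_Ioi, mem_Ioc, not_and, not_le] at hx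
      intro h; exact absurd (hx.2 hx.1) (not_lt.2 h.2)
    rw [h0U x hx', zero_mul]
  rw [setIntegral_eq_of_subset_of_forall_diff_eq_zero measurableSet_Ioi
      Ioc_subset_Ioi_self hz]
  have : ∀ x ∈ Ioc (0:ℝ) 1, U x * (cV * (2 * min x 1 - 1)) = cU * cV * (2 * x - 1) := by
    intro x hx
    rw [hcU x ⟨le_of_lt hx.1, hx.2⟩, min_eq_left hx.2]; ring
  rw [setIntegral_congr_fun measurableSet_Ioc this]
  rw [← intervalIntegral.integral_of_le zero_le_one]
  have : ∫ x in (0:ℝ)..1, cU * cV * (2 * x - 1) = 0 := by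
    rw [intervalIntegral.integral_const_mul]
    have h1 : IntervalIntegrable (fun x : ℝ => 2 * x) volume 0 1 :=
      (intervalIntegral.intervalIntegrable_id).const_mul 2
    rw [intervalIntegral.integral_sub h1 intervalIntegrable_const,
      intervalIntegral.integral_const_mul, integral_id]
    norm_num
  rw [this]

lemma mca_bound {g : ℝ → ℝ} (hg : IsStrategy g) (hm : mca g ≤ 1/2) :
    2 * (∫ t in Ioi (0:ℝ), t * g t) - (∫ t in Ioi (0:ℝ), g t) ≤ 0 := by
  have hT := strat_pos hg
  unfold mca at hm
  rw [div_le_iff₀ hT] at hm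
  linarith

lemma wp_le_zero {g U : ℝ → ℝ} {cU : ℝ} (hg : IsStrategy g) (hm : mca g ≤ 1/2)
    (hcpos : 0 < cU)
    (hcU : ∀ x ∈ Icc (0:ℝ) 1, U x = cU) (h0U : ∀ x, x ∉ Icc (0:ℝ) 1 → U x = 0) :
    wp g U ≤ 0 := by
  have Ig := strat_integrable hg
  have Itg := strat_integrable_mul hg
  have hnn := hg.2.2.1
  rw [wp_against_unif g hcU h0U]
  have hre : ∀ x : ℝ, g x * (cU * (2 * min x 1 - 1)) = cU * (g x * (2 * min x 1 - 1)) := by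
    intro x; ring
  simp_rw [hre]
  rw [integral_const_mul]
  have key : ∫ x in Ioi (0:ℝ), g x * (2 * min x 1 - 1)
      ≤ ∫ x in Ioi (0:ℝ), g x * (2 * x - 1) := by
    have I2 : IntegrableOn (fun x => g x * (2 * x - 1)) (Ioi (0:ℝ)) := by
      have : (fun x => g x * (2 * x - 1)) = fun x => 2 * (x * g x) - g x := by
        funext x; ring
      rw [this]
      exact ((Itg.const_mul 2).sub Ig).integrableOn
    have I1 : IntegrableOn (fun x => g x * (2 * min x 1 - 1)) (Ioi (0:ℝ)) := by
      refine Integrable.mono' (Ig.integrableOn) ?_ ?_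
      · exact (hg.1.mul (((measurable_id.min measurable_const).const_mul 2).sub
          measurable_const)).aestronglyMeasurable.restrict
      · rw [ae_restrict_iff' measurableSet_Ioi]
        filter_upwards with x hx
        rw [Real.norm_eq_abs, abs_mul, abs_of_nonneg (hnn x)]
        have h1 : |2 * min x 1 - 1| ≤ 1 := by
          rw [abs_le]
          constructor
          · have : (0:ℝ) ≤ min x 1 := le_min (le_of_lt hx) zero_le_one
            linarith
          · have : min x 1 ≤ 1 := min_le_right _ _
            linarith
        calc g x * |2 * min x 1 - 1| ≤ g x * 1 := mul_le_mul_of_nonneg_left h1 (hnn x)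
          _ = g x := mul_one _
    refine setIntegral_mono_on I1 I2 measurableSet_Ioi (fun x hx => ?_)
    have : min x 1 ≤ x := min_le_left _ _
    have := hnn x
    nlinarith
  have heq : ∫ x in Ioi (0:ℝ), g x * (2 * x - 1)
      = 2 * (∫ t in Ioi (0:ℝ), t * g t) - (∫ t in Ioi (0:ℝ), g t) := by
    have : ∀ x : ℝ, g x * (2 * x - 1) = 2 * (x * g x) - g x := by intro x; ring
    simp_rw [this]
    rw [integral_sub ((Itg.const_mul 2).integrableOn) Ig.integrableOn,
      integral_const_mul]
  have := mca_bound hg hm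
  rw [heq] at key
  have : ∫ x in Ioi (0:ℝ), g x * (2 * min x 1 - 1) ≤ 0 := le_trans key this
  exact mul_nonpos_of_nonneg_of_nonpos (le_of_lt hcpos) this

lemma fubini_tri {g : ℝ → ℝ} (hm : Measurable g) (Cb : ℝ) (hCb : ∀ x, |g x| ≤ Cb)
    (hsupp : ∀ t, t ∉ Icc (0:ℝ) 1 → g t = 0) :
    ∫ x in Ioc (0:ℝ) 1, (∫ t in Ioc (0:ℝ) x, g t) = ∫ t in Ioc (0:ℝ) 1, (1 - t) * g t := by
  have hstep1 : ∀ x : ℝ, ∫ t in Ioc (0:ℝ) x, g t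
      = ∫ t in Icc (0:ℝ) 1, (Ioc (0:ℝ) x).indicator g t := by
    intro x
    rw [← integral_indicator measurableSet_Ioc]
    refine (setIntegral_eq_integral_of_forall_compl_eq_zero (fun t ht => ?_)).symm
    by_cases h : t ∈ Ioc (0:ℝ) x
    · rw [indicator_of_mem h]; exact hsupp t ht
    · rw [indicator_of_notMem h]
  simp_rw [hstep1]
  haveI : IsFiniteMeasure (volume.restrict (Ioc (0:ℝ) 1)) :=
    ⟨by rw [Measure.restrict_apply_univ, Real.volume_Ioc]; simp⟩
  haveI : IsFiniteMeasure (volume.restrict (Icc (0:ℝ) 1)) :=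
    ⟨by rw [Measure.restrict_apply_univ, Real.volume_Icc]; simp⟩
  have hint : Integrable (Function.uncurry fun x t => (Ioc (0:ℝ) x).indicator g t)
      ((volume.restrict (Ioc (0:ℝ) 1)).prod (volume.restrict (Icc (0:ℝ) 1))) := by
    have hmeas : Measurable (Function.uncurry fun x t => (Ioc (0:ℝ) x).indicator g t) := by
      have heq : (Function.uncurry fun x t => (Ioc (0:ℝ) x).indicator g t) =
          ({p : ℝ × ℝ | 0 < p.2 ∧ p.2 ≤ p.1}).indicator (fun p => g p.2) := by
        funext p
        rcases p with ⟨x, t⟩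
        by_cases h : t ∈ Ioc (0:ℝ) x
        · rw [Function.uncurry_apply_pair, indicator_of_mem h,
            indicator_of_mem (show ((x,t) : ℝ × ℝ) ∈ {p : ℝ × ℝ | 0 < p.2 ∧ p.2 ≤ p.1} from h)]
        · rw [Function.uncurry_apply_pair, indicator_of_notMem h,
            indicator_of_notMem (show ((x,t) : ℝ × ℝ) ∉ {p : ℝ × ℝ | 0 < p.2 ∧ p.2 ≤ p.1} from h)]
      rw [heq]
      exact Measurable.indicator (hm.comp measurable_snd)
        ((measurableSet_lt measurable_const measurable_snd).inter
          (measurableSet_le measurable_snd measurable_fst))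
    refine Integrable.mono' (integrable_const (max Cb 0)) hmeas.aestronglyMeasurable ?_
    filter_upwards with p
    rcases p with ⟨x, t⟩
    rw [Function.uncurry_apply_pair]
    by_cases h : t ∈ Ioc (0:ℝ) x
    · rw [indicator_of_mem h]; exact le_trans (hCb t) (le_max_left _ _)
    · rw [indicator_of_notMem h]; simp
  rw [MeasureTheory.integral_integral_swap hint]
  rw [← setIntegral_congr_set Ioc_ae_eq_Icc]
  refine setIntegral_congr_fun measurableSet_Ioc (fun t ht => ?_)
  have hFt : ∀ x : ℝ, (Ioc (0:ℝ) x).indicator g t = (Ici t).indicator (fun _ => g t) x := by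
    intro x
    by_cases h : t ≤ x
    · rw [indicator_of_mem (mem_Ioc.mpr ⟨ht.1, h⟩), indicator_of_mem (mem_Ici.2 h)]
    · rw [indicator_of_notMem (fun hmem => h hmem.2),
        indicator_of_notMem (fun hmem => h (mem_Ici.1 hmem))]
  simp_rw [hFt]
  rw [setIntegral_indicator measurableSet_Ici, setIntegral_const]
  have hset : Ioc (0:ℝ) 1 ∩ Ici t = Icc t 1 := by
    ext x
    simp only [mem_inter_iff, mem_Ioc, mem_Ici, mem_Icc]
    constructor
    · rintro ⟨⟨_, h2⟩, h3⟩; exact ⟨h3, h2⟩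
    · rintro ⟨h1, h2⟩; exact ⟨⟨lt_of_lt_of_le ht.1 h1, h2⟩, h1⟩
  rw [hset, measureReal_def, Real.volume_Icc, smul_eq_mul, ENNReal.toReal_ofReal (by linarith [ht.2])]

lemma part1 {u g : ℝ → ℝ} {c : ℝ} (hc : 0 < c)
    (huc : ∀ x ∈ Icc (0:ℝ) 1, u x = c) (hu0 : ∀ x, x ∉ Icc (0:ℝ) 1 → u x = 0)
    (hg : IsStrategy g) (hgs : Function.support g ⊆ Icc (0:ℝ) 1) (hmca : mca g ≤ 1/2) :
    wp u g = (∫ x in Icc (0:ℝ) 1, u x) * (∫ x in Icc (0:ℝ) 1, g x) * (1 - 2 * mca g) ∧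
      0 ≤ wp u g := by
  have Ig := strat_integrable hg
  have Itg := strat_integrable_mul hg
  have hnn := hg.2.2.1
  have hgmeas := hg.1
  obtain ⟨Cb, hCb⟩ := hg.2.1
  have hCb' : ∀ x, |g x| ≤ Cb := fun x => by
    rw [abs_of_nonneg (hnn x)]; exact hCb x
  have hgz : ∀ t, t ∉ Icc (0:ℝ) 1 → g t = 0 := by
    intro t ht
    by_contra h
    exact ht (hgs h)
  have hzd : ∀ h : ℝ → ℝ, (∀ x ∈ Ioi (0:ℝ) \ Ioc 0 1, h x = 0) →
      ∫ x in Ioi (0:ℝ), h x = ∫ x in Ioc (0:ℝ) 1, h x := fun h hz =>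
    setIntegral_eq_of_subset_of_forall_diff_eq_zero measurableSet_Ioi Ioc_subset_Ioi_self hz
  have hdiff : ∀ x : ℝ, x ∈ Ioi (0:ℝ) \ Ioc 0 1 → x ∉ Icc (0:ℝ) 1 := by
    intro x hx h
    simp only [mem_diff, mem_Ioi, mem_Ioc, not_and, not_le] at hx
    exact absurd (hx.2 hx.1) (not_lt.2 h.2)
  set T := ∫ t in Ioc (0:ℝ) 1, g t with hT
  set M := ∫ t in Ioc (0:ℝ) 1, t * g t with hM
  have hTT : ∫ t in Ioi (0:ℝ), g t = T :=
    hzd g (fun x hx => hgz x (hdiff x hx))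
  have hMM : ∫ t in Ioi (0:ℝ), t * g t = M :=
    hzd _ (fun x hx => by rw [hgz x (hdiff x hx), mul_zero])
  have hTpos : 0 < T := hTT ▸ strat_pos hg
  -- the cumulative function
  set G : ℝ → ℝ := fun x => ∫ t in Ioc (0:ℝ) x, g t with hG
  have hGmono : Monotone G := by
    intro a b hab
    exact setIntegral_mono_set Ig.integrableOn
      (Filter.Eventually.of_forall (fun x => hnn x))
      (HasSubset.Subset.eventuallyLE (Ioc_subset_Ioc_right hab))
  have hGint : IntegrableOn G (Ioc (0:ℝ) 1) := by
    refine Integrable.mono' (integrable_const (∫ t, |g t|)) 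
      hGmono.measurable.aestronglyMeasurable.restrict ?_
    filter_upwards with x
    rw [Real.norm_eq_abs]
    have h1 : G x ≤ ∫ t, |g t| := by
      calc G x ≤ ∫ t in Ioc (0:ℝ) x, |g t| :=
            setIntegral_mono_on Ig.integrableOn Ig.abs.integrableOn measurableSet_Ioc
              (fun t _ => le_abs_self _)
        _ ≤ ∫ t, |g t| := setIntegral_le_integral Ig.abs
              (Filter.Eventually.of_forall (fun t => abs_nonneg _))
    have h2 : 0 ≤ G x := setIntegral_nonneg measurableSet_Ioc (fun t _ => hnn t)
    rw [abs_of_nonneg h2]; exact h1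
  have hGfub : ∫ x in Ioc (0:ℝ) 1, G x = T - M := by
    rw [hG]
    rw [fubini_tri hgmeas Cb hCb' hgz]
    have : ∀ t : ℝ, (1 - t) * g t = g t - t * g t := fun t => by ring
    simp_rw [this]
    rw [integral_sub Ig.integrableOn Itg.integrableOn]
  have htail : ∀ x ∈ Ioi (0:ℝ), ∫ t in Ioi x, g t = T - G x := by
    intro x hx
    have hsplit : ∫ t in Ioc (0:ℝ) x ∪ Ioi x, g t
        = (∫ t in Ioc (0:ℝ) x, g t) + ∫ t in Ioi x, g t :=
      setIntegral_union Ioc_disjoint_Ioi_same measurableSet_Ioi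
        Ig.integrableOn Ig.integrableOn
    rw [Ioc_union_Ioi_eq_Ioi (le_of_lt hx)] at hsplit
    rw [hTT] at hsplit
    rw [hG]; simp only
    linarith
  -- main computation
  have hwp : wp u g = c * (T - 2 * M) := by
    unfold wp
    have h1 : ∫ x in Ioi (0:ℝ), u x * ((∫ t in Ioc (0:ℝ) x, g t) - ∫ t in Ioi x, g t)
        = ∫ x in Ioc (0:ℝ) 1, u x * ((∫ t in Ioc (0:ℝ) x, g t) - ∫ t in Ioi x, g t) :=
      hzd _ (fun x hx => by rw [hu0 x (hdiff x hx), zero_mul])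
    rw [h1]
    have h2 : ∀ x ∈ Ioc (0:ℝ) 1,
        u x * ((∫ t in Ioc (0:ℝ) x, g t) - ∫ t in Ioi x, g t) = c * (2 * G x - T) := by
      intro x hx
      rw [huc x ⟨le_of_lt hx.1, hx.2⟩, htail x hx.1]
      rw [hG]; simp only; ring
    rw [setIntegral_congr_fun measurableSet_Ioc h2, integral_const_mul]
    have h3 : ∫ x in Ioc (0:ℝ) 1, (2 * G x - T)
        = 2 * (∫ x in Ioc (0:ℝ) 1, G x) - T := by
      rw [integral_sub (hGint.const_mul 2) (integrableOn_const (by simp))]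
      rw [integral_const_mul, setIntegral_const, measureReal_def, Real.volume_Ioc, smul_eq_mul]
      norm_num
    rw [h3, hGfub]; ring
  have hIccu : ∫ x in Icc (0:ℝ) 1, u x = c := by
    rw [setIntegral_congr_fun measurableSet_Icc huc, setIntegral_const, measureReal_def, Real.volume_Icc,
      smul_eq_mul]
    norm_num
  have hIccg : ∫ x in Icc (0:ℝ) 1, g x = T := by
    rw [← setIntegral_congr_set Ioc_ae_eq_Icc]
  have hmca' : mca g = M / T := by
    unfold mca; rw [hTT, hMM]
  constructor
  · rw [hwp, hIccu, hIccg, hmca']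
    field_simp
  · rw [hwp]
    have hMT : M / T ≤ 1/2 := by rw [← hmca']; exact hmca
    rw [div_le_iff₀ hTpos] at hMT
    have : 0 ≤ T - 2 * M := by linarith
    positivity

theorem stmt9 (u : ℝ → ℝ) (hu : IsStrategy u) (c : ℝ) (hc : 0 < c)
    (huc : ∀ x ∈ Icc (0:ℝ) 1, u x = c) (hu0 : ∀ x, x ∉ Icc (0:ℝ) 1 → u x = 0) :
    (∀ g : ℝ → ℝ, IsStrategy g → Function.support g ⊆ Icc (0:ℝ) 1 → mca g ≤ 1/2 →
      wp u g = (∫ x in Icc (0:ℝ) 1, u x) * (∫ x in Icc (0:ℝ) 1, g x) * (1 - 2 * mca g) ∧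
      0 ≤ wp u g) ∧
    (∀ u₂ : ℝ → ℝ, IsStrategy u₂ →
      (∃ c₂ : ℝ, 0 < c₂ ∧ (∀ x ∈ Icc (0:ℝ) 1, u₂ x = c₂) ∧
        (∀ x, x ∉ Icc (0:ℝ) 1 → u₂ x = 0)) →
      ∀ g : ℝ → ℝ, IsStrategy g → mca g ≤ 1/2 →
        wp g u₂ ≤ wp u u₂ ∧ wp g u ≤ wp u₂ u) := by
  constructor
  · intro g hg hgs hmca
    exact part1 hc huc hu0 hg hgs hmca
  · rintro u₂ hu₂ ⟨c₂, hc₂, huc₂, hu₂0⟩ g hg hmca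
    constructor
    · rw [wp_unif_unif huc hu0 huc₂ hu₂0]
      exact wp_le_zero hg hmca hc₂ huc₂ hu₂0
    · rw [wp_unif_unif huc₂ hu₂0 huc hu0]
      exact wp_le_zero hg hmca hc huc hu0
end

section
/- Let the constraint value be C = 1/2 and let f be a bounded measurable strategy supported in [0, 1] with mca(f) ≤ 1/2. If f is not almost everywhere equal to a constant on [0, 1], then there exists a bounded measurable strategy g supported in [0, 1] with mca(g) ≤ 1/2 such that wp(f; g) < 0. -/
open MeasureTheory Set Filter Topology

namespace Stmt10Aux


lemma integrable_glob {f : ℝ → ℝ} (hm : Measurable f) (hb : ∃ C, ∀ x, |f x| ≤ C)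
    (hs : Function.support f ⊆ Icc 0 1) : Integrable f volume := by
  obtain ⟨C, hC⟩ := hb
  have hind : (Icc (0:ℝ) 1).indicator f = f := Set.indicator_eq_self.2 hs
  rw [← hind, integrable_indicator_iff measurableSet_Icc]
  refine Integrable.mono' (g := fun _ => C) (integrableOn_const ?_) ?_ ?_
  · rw [Real.volume_Icc]; exact ENNReal.ofReal_ne_top
  · exact hm.aestronglyMeasurable.restrict
  · exact Filter.Eventually.of_forall fun x => hC x

/-- the primitive as interval integral -/
lemma primitive_eq {g : ℝ → ℝ} (hs : Function.support g ⊆ Icc 0 1) (x : ℝ) :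
    (∫ t in Ioc (0:ℝ) x, g t) = ∫ t in (0:ℝ)..x, g t := by
  rcases le_or_gt 0 x with hx | hx
  · rw [intervalIntegral.integral_of_le hx]
  · rw [Set.Ioc_eq_empty (by simpa using hx.le), intervalIntegral.integral_of_ge hx.le]
    have h1 : (∫ t in Ioc x 0, g t) = 0 := by
      have h0 : ∀ᵐ t ∂volume.restrict (Ioc x 0), g t = 0 := by
        rw [ae_restrict_iff' measurableSet_Ioc]
        have hz : ∀ᵐ t : ℝ, t ≠ (0:ℝ) := by
          rw [ae_iff]
          simpa using Real.volume_singleton (x := 0)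
        filter_upwards [hz] with t ht htm
        by_contra hgt
        have := hs hgt
        exact ht (le_antisymm htm.2 this.1)
      simpa using integral_eq_zero_of_ae h0
    simp [h1]

lemma continuous_primitive {g : ℝ → ℝ} (hm : Measurable g) (hb : ∃ C, ∀ x, |g x| ≤ C)
    (hs : Function.support g ⊆ Icc 0 1) :
    Continuous fun x => ∫ t in Ioc (0:ℝ) x, g t := by
  have : (fun x => ∫ t in Ioc (0:ℝ) x, g t) = fun x => ∫ t in (0:ℝ)..x, g t := by
    funext x; exact primitive_eq hs x
  rw [this]
  exact intervalIntegral.continuous_primitive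
    (fun a b => (integrable_glob hm hb hs).intervalIntegrable) 0

lemma split_Ioi {g : ℝ → ℝ} (hm : Measurable g) (hb : ∃ C, ∀ x, |g x| ≤ C)
    (hs : Function.support g ⊆ Icc 0 1) {x : ℝ} (hx : 0 < x) :
    (∫ t in Ioi (0:ℝ), g t) = (∫ t in Ioc (0:ℝ) x, g t) + ∫ t in Ioi x, g t := by
  rw [← setIntegral_union Set.Ioc_disjoint_Ioi_same measurableSet_Ioi
      ((integrable_glob hm hb hs).integrableOn) ((integrable_glob hm hb hs).integrableOn),
    Set.Ioc_union_Ioi_eq_Ioi hx.le]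

lemma bounded_primitive {g : ℝ → ℝ} (hm : Measurable g) (hb : ∃ C, ∀ x, |g x| ≤ C)
    (hs : Function.support g ⊆ Icc 0 1) :
    ∃ M, ∀ x : ℝ, ‖∫ t in Ioc (0:ℝ) x, g t‖ ≤ M := by
  refine ⟨∫ t, ‖g t‖, fun x => ?_⟩
  calc ‖∫ t in Ioc (0:ℝ) x, g t‖ ≤ ∫ t in Ioc (0:ℝ) x, ‖g t‖ := norm_integral_le_integral_norm _
    _ ≤ ∫ t, ‖g t‖ := setIntegral_le_integral (integrable_glob hm hb hs).norm
        (Filter.Eventually.of_forall fun t => norm_nonneg _)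



lemma fubini_core {f g : ℝ → ℝ}
    (hfm : Measurable f) (hfb : ∃ C, ∀ x, |f x| ≤ C) (hfs : Function.support f ⊆ Icc 0 1)
    (hgm : Measurable g) (hgb : ∃ C, ∀ x, |g x| ≤ C) (hgs : Function.support g ⊆ Icc 0 1) :
    (∫ x in Ioi (0:ℝ), f x * ∫ t in Ioc (0:ℝ) x, g t)
      = ∫ u in Ioi (0:ℝ), g u * ((∫ t in Ioi (0:ℝ), f t) - ∫ t in Ioc (0:ℝ) u, f t) := by
  obtain ⟨Cf, hCf⟩ := hfb
  obtain ⟨Cg, hCg⟩ := hgb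
  have hIf : Integrable f volume := integrable_glob hfm ⟨Cf, hCf⟩ hfs
  have hIg : Integrable g volume := integrable_glob hgm ⟨Cg, hCg⟩ hgs
  set S : Set (ℝ × ℝ) := {p | 0 < p.2 ∧ p.2 ≤ p.1} with hS
  have hSm : MeasurableSet S :=
    (measurableSet_lt measurable_const measurable_snd).inter
      (measurableSet_le measurable_snd measurable_fst)
  set μ : Measure ℝ := volume.restrict (Ioi (0:ℝ)) with hμ
  have hKm : Measurable fun p : ℝ × ℝ => f p.1 * g p.2 * S.indicator 1 p :=
    ((hfm.comp measurable_fst).mul (hgm.comp measurable_snd)).mul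
      (measurable_one.indicator hSm)
  have hKint : Integrable (fun p : ℝ × ℝ => f p.1 * g p.2 * S.indicator 1 p) (μ.prod μ) := by
    refine Integrable.mono'
      (g := fun p : ℝ × ℝ => (Icc (0:ℝ) 1 ×ˢ Icc (0:ℝ) 1).indicator (fun _ => |Cf| * |Cg|) p)
      ?_ hKm.aestronglyMeasurable (Filter.Eventually.of_forall fun p => ?_)
    · rw [integrable_indicator_iff (measurableSet_Icc.prod measurableSet_Icc)]
      refine integrableOn_const (ne_of_lt ?_)
      rw [Measure.prod_prod]
      have h1 : μ (Icc (0:ℝ) 1) ≤ volume (Icc (0:ℝ) 1) := Measure.restrict_apply_le _ _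
      have h2 : volume (Icc (0:ℝ) 1) = 1 := by rw [Real.volume_Icc]; norm_num
      calc μ (Icc (0:ℝ) 1) * μ (Icc (0:ℝ) 1) ≤ 1 * 1 := by
            exact mul_le_mul' (h2 ▸ h1) (h2 ▸ h1)
        _ < ⊤ := by norm_num
    · show ‖f p.1 * g p.2 * S.indicator 1 p‖ ≤
        (Icc (0:ℝ) 1 ×ˢ Icc (0:ℝ) 1).indicator (fun _ => |Cf| * |Cg|) p
      by_cases hp : p ∈ Icc (0:ℝ) 1 ×ˢ Icc (0:ℝ) 1
      · rw [Set.indicator_of_mem hp]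
        have h1 : |f p.1| ≤ |Cf| := le_trans (hCf p.1) (le_abs_self _)
        have h2 : |g p.2| ≤ |Cg| := le_trans (hCg p.2) (le_abs_self _)
        have h3 : |S.indicator (1 : ℝ × ℝ → ℝ) p| ≤ 1 := by
          by_cases hmem : p ∈ S
          · rw [Set.indicator_of_mem hmem]; simp
          · rw [Set.indicator_of_notMem hmem]; simp
        have hkey := mul_le_mul (mul_le_mul h1 h2 (abs_nonneg _) (abs_nonneg _)) h3
          (abs_nonneg _) (by positivity)
        rw [Real.norm_eq_abs, abs_mul, abs_mul]
        calc |f p.1| * |g p.2| * |S.indicator 1 p| ≤ |Cf| * |Cg| * 1 := hkey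
          _ = |Cf| * |Cg| := mul_one _
      · rw [Set.indicator_of_notMem hp]
        have : f p.1 * g p.2 = 0 := by
          rw [Set.mem_prod] at hp
          push_neg at hp
          by_cases h1 : p.1 ∈ Icc (0:ℝ) 1
          · have : g p.2 = 0 := by
              by_contra hne; exact hp h1 (hgs hne)
            rw [this, mul_zero]
          · have : f p.1 = 0 := by
              by_contra hne; exact h1 (hfs hne)
            rw [this, zero_mul]
        rw [this, zero_mul, norm_zero]
  have hswap :
      (∫ x, ∫ u, f x * g u * S.indicator 1 (x, u) ∂μ ∂μ)
        = ∫ u, ∫ x, f x * g u * S.indicator 1 (x, u) ∂μ ∂μ :=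
    integral_integral_swap hKint
  have lhs_eq : (∫ x, ∫ u, f x * g u * S.indicator 1 (x, u) ∂μ ∂μ)
      = ∫ x in Ioi (0:ℝ), f x * ∫ t in Ioc (0:ℝ) x, g t := by
    rw [hμ]
    refine setIntegral_congr_fun measurableSet_Ioi fun x _ => ?_
    have hpt : ∀ u : ℝ, f x * g u * S.indicator 1 (x, u) = f x * (Ioc (0:ℝ) x).indicator g u := by
      intro u
      by_cases hu : u ∈ Ioc (0:ℝ) x
      · rw [Set.indicator_of_mem hu, Set.indicator_of_mem (by exact ⟨hu.1, hu.2⟩ : (x,u) ∈ S)]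
        simp
      · have hnm : (x,u) ∉ S := fun hmem => hu ⟨hmem.1, hmem.2⟩
        rw [Set.indicator_of_notMem hu, Set.indicator_of_notMem hnm]
        ring
    simp_rw [hpt]
    rw [integral_const_mul, setIntegral_indicator measurableSet_Ioc,
      Set.inter_eq_self_of_subset_right Set.Ioc_subset_Ioi_self]
  have rhs_eq : (∫ u, ∫ x, f x * g u * S.indicator 1 (x, u) ∂μ ∂μ)
      = ∫ u in Ioi (0:ℝ), g u * ((∫ t in Ioi (0:ℝ), f t) - ∫ t in Ioc (0:ℝ) u, f t) := by
    rw [hμ]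
    refine setIntegral_congr_fun measurableSet_Ioi fun u hu => ?_
    have hu' : (0:ℝ) < u := hu
    have hpt : ∀ x : ℝ, f x * g u * S.indicator 1 (x, u) = g u * (Ici u).indicator f x := by
      intro x
      by_cases hx : x ∈ Ici u
      · rw [Set.indicator_of_mem hx, Set.indicator_of_mem (show (x,u) ∈ S from ⟨hu', hx⟩)]
        rw [Pi.one_apply, mul_one, mul_comm]
      · have hnm : (x,u) ∉ S := fun hmem => hx hmem.2
        rw [Set.indicator_of_notMem hx, Set.indicator_of_notMem hnm]
        ring
    simp_rw [hpt]
    rw [integral_const_mul, setIntegral_indicator measurableSet_Ici,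
      Set.inter_eq_self_of_subset_right
        (show Ici u ⊆ Ioi (0:ℝ) from fun y hy => lt_of_lt_of_le hu' hy),
      integral_Ici_eq_integral_Ioi]
    congr 1
    rw [split_Ioi hfm ⟨Cf, hCf⟩ hfs hu']
    ring
  rw [← lhs_eq, hswap, rhs_eq]

/-- Master identity via Fubini. -/
lemma master {f g : ℝ → ℝ}
    (hfm : Measurable f) (hfb : ∃ C, ∀ x, |f x| ≤ C) (hfs : Function.support f ⊆ Icc 0 1)
    (hgm : Measurable g) (hgb : ∃ C, ∀ x, |g x| ≤ C) (hgs : Function.support g ⊆ Icc 0 1) :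
    wp f g = ∫ u in Ioi (0:ℝ),
      g u * ((∫ t in Ioi (0:ℝ), f t) - 2 * ∫ t in Ioc (0:ℝ) u, f t) := by
  obtain ⟨Cf, hCf⟩ := hfb
  obtain ⟨Cg, hCg⟩ := hgb
  have hIf : Integrable f volume := integrable_glob hfm ⟨Cf, hCf⟩ hfs
  have hIg : Integrable g volume := integrable_glob hgm ⟨Cg, hCg⟩ hgs
  set I : ℝ := ∫ t in Ioi (0:ℝ), f t with hI
  set Jg : ℝ := ∫ t in Ioi (0:ℝ), g t with hJg
  set G : ℝ → ℝ := fun x => ∫ t in Ioc (0:ℝ) x, g t with hG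
  set F : ℝ → ℝ := fun x => ∫ t in Ioc (0:ℝ) x, f t with hF
  have hGcont : Continuous G := continuous_primitive hgm ⟨Cg, hCg⟩ hgs
  have hFcont : Continuous F := continuous_primitive hfm ⟨Cf, hCf⟩ hfs
  -- step 1
  have step1 : wp f g = ∫ x in Ioi (0:ℝ), f x * (2 * G x - Jg) := by
    unfold wp
    refine setIntegral_congr_fun measurableSet_Ioi fun x hx => ?_
    have := split_Ioi hgm ⟨Cg, hCg⟩ hgs (hx : (0:ℝ) < x)
    have hIoi : (∫ t in Ioi x, g t) = Jg - G x := by rw [hJg, this]; ring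
    rw [hIoi]; ring
  have hFub := fubini_core hfm ⟨Cf, hCf⟩ hfs hgm ⟨Cg, hCg⟩ hgs
  obtain ⟨Mg, hMg⟩ := bounded_primitive hgm ⟨Cg, hCg⟩ hgs
  obtain ⟨Mf, hMf⟩ := bounded_primitive hfm ⟨Cf, hCf⟩ hfs
  have h1 : Integrable (fun x => f x * G x) (volume.restrict (Ioi (0:ℝ))) := by
    have := Integrable.bdd_mul (μ := volume.restrict (Ioi (0:ℝ))) (f := G) hIf.restrict hGcont.aestronglyMeasurable.restrict
      (Eventually.of_forall fun x => hMg x)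
    simpa [mul_comm] using this
  have h2 : Integrable (fun u => g u * (I - F u)) (volume.restrict (Ioi (0:ℝ))) := by
    have := Integrable.bdd_mul (μ := volume.restrict (Ioi (0:ℝ))) (f := fun u => I - F u) hIg.restrict
      ((continuous_const.sub hFcont).aestronglyMeasurable.restrict)
      (c := |I| + Mf) (Eventually.of_forall fun x => by
        have := hMf x
        calc ‖I - F x‖ ≤ ‖I‖ + ‖F x‖ := norm_sub_le _ _
          _ ≤ |I| + Mf := by rw [Real.norm_eq_abs]; linarith)
    simpa [mul_comm] using this
  have h3 : Integrable (fun x => f x * Jg) (volume.restrict (Ioi (0:ℝ))) :=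
    hIf.restrict.mul_const Jg
  have h4 : Integrable (fun u => g u * I) (volume.restrict (Ioi (0:ℝ))) :=
    hIg.restrict.mul_const I
  rw [step1]
  have e1 : ∀ x : ℝ, f x * (2 * G x - Jg) = 2 * (f x * G x) - f x * Jg := fun x => by ring
  simp_rw [e1]
  rw [integral_sub (h1.const_mul 2) h3, integral_const_mul, integral_mul_const]
  have e2 : ∀ u : ℝ, g u * (I - 2 * F u) = 2 * (g u * (I - F u)) - g u * I := fun u => by ring
  simp only [hF] at e2
  simp_rw [e2]
  rw [integral_sub (h2.const_mul 2) h4, integral_const_mul, integral_mul_const]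
  rw [hFub]
  ring

end Stmt10Aux

namespace Stmt10Aux



lemma blk_meas (c s t : ℝ) : Measurable ((Ioc s t).indicator (fun _ => c)) :=
  measurable_const.indicator measurableSet_Ioc

lemma blk_abs (c s t : ℝ) (x : ℝ) : |(Ioc s t).indicator (fun _ => c) x| ≤ |c| := by
  by_cases h : x ∈ Ioc s t
  · rw [Set.indicator_of_mem h]
  · rw [Set.indicator_of_notMem h]; simp

lemma blk_supp (c s t : ℝ) (h0 : 0 ≤ s) (ht : t ≤ 1) :
    Function.support ((Ioc s t).indicator (fun _ => c)) ⊆ Icc 0 1 := by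
  intro x hx
  have : x ∈ Ioc s t := by
    by_contra h
    exact hx (Set.indicator_of_notMem h _)
  exact ⟨le_trans h0 this.1.le, le_trans this.2 ht⟩

lemma integral_blk (c s t : ℝ) (h0 : 0 ≤ s) (hst : s ≤ t) :
    ∫ x in Ioi (0:ℝ), (Ioc s t).indicator (fun _ => c) x = c * (t - s) := by
  rw [setIntegral_indicator measurableSet_Ioc,
    Set.inter_eq_self_of_subset_right
      (show Ioc s t ⊆ Ioi (0:ℝ) from fun x hx => lt_of_le_of_lt h0 hx.1),
    setIntegral_const, measureReal_def, Real.volume_Ioc, ENNReal.toReal_ofReal (by linarith), smul_eq_mul,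
    mul_comm]

lemma integral_blk_mul (c s t : ℝ) (h0 : 0 ≤ s) (hst : s ≤ t) (φ : ℝ → ℝ) :
    ∫ u in Ioi (0:ℝ), (Ioc s t).indicator (fun _ => c) u * φ u
      = c * ∫ u in Ioc s t, φ u := by
  have hpt : ∀ u : ℝ, (Ioc s t).indicator (fun _ => c) u * φ u
      = (Ioc s t).indicator (fun y => c * φ y) u := by
    intro u
    by_cases h : u ∈ Ioc s t
    · rw [Set.indicator_of_mem h, Set.indicator_of_mem h]
    · rw [Set.indicator_of_notMem h, Set.indicator_of_notMem h, zero_mul]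
  simp_rw [hpt]
  rw [setIntegral_indicator measurableSet_Ioc,
    Set.inter_eq_self_of_subset_right
      (show Ioc s t ⊆ Ioi (0:ℝ) from fun x hx => lt_of_le_of_lt h0 hx.1),
    integral_const_mul]

lemma integral_id_blk (c s t : ℝ) (h0 : 0 ≤ s) (hst : s ≤ t) :
    ∫ x in Ioi (0:ℝ), x * (Ioc s t).indicator (fun _ => c) x = c * (t^2 - s^2) / 2 := by
  have hpt : ∀ x : ℝ, x * (Ioc s t).indicator (fun _ => c) x
      = (Ioc s t).indicator (fun _ => c) x * x := fun x => mul_comm _ _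
  simp_rw [hpt]
  rw [integral_blk_mul c s t h0 hst (fun y => y)]
  rw [← intervalIntegral.integral_of_le hst, integral_id]
  ring

lemma integral_blk_le (s t B : ℝ) (hst : s ≤ t) {φ : ℝ → ℝ} (hφ : Continuous φ)
    (hb : ∀ y ∈ Icc s t, φ y ≤ B) : ∫ u in Ioc s t, φ u ≤ (t - s) * B := by
  have h1 : ∫ u in Ioc s t, φ u ≤ ∫ _ in Ioc s t, B := by
    refine setIntegral_mono_on hφ.integrableOn_Ioc ?_ measurableSet_Ioc fun y hy =>
      hb y ⟨hy.1.le, hy.2⟩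
    exact integrableOn_const (by rw [Real.volume_Ioc]; exact ENNReal.ofReal_ne_top)
  calc ∫ u in Ioc s t, φ u ≤ ∫ _ in Ioc s t, B := h1
    _ = (t - s) * B := by
        rw [setIntegral_const, measureReal_def, Real.volume_Ioc, ENNReal.toReal_ofReal (by linarith),
          smul_eq_mul]

lemma integrable_mul_glob {f : ℝ → ℝ} (hm : Measurable f) (hb : ∃ C, ∀ x, |f x| ≤ C)
    (hs : Function.support f ⊆ Icc 0 1) : Integrable (fun x => x * f x) volume := by
  obtain ⟨C, hC⟩ := hb
  apply integrable_glob (by fun_prop)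
  · refine ⟨|C| + 1, fun x => ?_⟩
    by_cases hx : f x = 0
    · simp [hx]; positivity
    · have hx1 : x ∈ Icc (0:ℝ) 1 := hs hx
      rw [abs_mul]
      have h1 : |x| ≤ 1 := abs_le.2 ⟨by linarith [hx1.1], hx1.2⟩
      nlinarith [abs_nonneg (f x), abs_nonneg x, hC x, abs_nonneg C, le_abs_self C]
  · intro x hx
    simp only [Function.mem_support] at hx
    exact hs (fun h => hx (by rw [h, mul_zero]))

/-- direct computation of the payoff against the uniform strategy. -/
lemma wp_unif {f : ℝ → ℝ} (hfm : Measurable f) (hfb : ∃ C, ∀ x, |f x| ≤ C)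
    (hfs : Function.support f ⊆ Icc 0 1) :
    wp f ((Ioc (0:ℝ) 1).indicator (fun _ => (1:ℝ)))
      = 2 * (∫ t in Ioi (0:ℝ), t * f t) - ∫ t in Ioi (0:ℝ), f t := by
  unfold wp
  have key : ∀ x ∈ Ioi (0:ℝ),
      f x * ((∫ t in Ioc (0:ℝ) x, (Ioc (0:ℝ) 1).indicator (fun _ => (1:ℝ)) t)
        - ∫ t in Ioi x, (Ioc (0:ℝ) 1).indicator (fun _ => (1:ℝ)) t)
      = 2 * (x * f x) - f x := by
    intro x hx
    have hx0 : (0:ℝ) < x := hx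
    have hA : (∫ t in Ioc (0:ℝ) x, (Ioc (0:ℝ) 1).indicator (fun _ => (1:ℝ)) t)
        = min x 1 := by
      rw [setIntegral_indicator measurableSet_Ioc, Set.Ioc_inter_Ioc, setIntegral_const, measureReal_def]
      rw [Real.volume_Ioc, ENNReal.toReal_ofReal (by simp [le_min hx0.le zero_le_one]),
        smul_eq_mul, mul_one]
      simp
    have hB : (∫ t in Ioi x, (Ioc (0:ℝ) 1).indicator (fun _ => (1:ℝ)) t)
        = 1 - min x 1 := by
      rw [setIntegral_indicator measurableSet_Ioc, Set.inter_comm, Set.Ioc_inter_Ioi,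
        setIntegral_const, measureReal_def, Real.volume_Ioc, smul_eq_mul, mul_one]
      rcases le_or_gt x 1 with h | h
      · rw [ENNReal.toReal_ofReal (by simp [hx0.le]; linarith)]
        simp [min_eq_left h, max_eq_right hx0.le]
      · rw [min_eq_right h.le]
        have : (1:ℝ) - 0 ⊔ x ≤ 0 := by simp [max_eq_right hx0.le]; linarith
        rw [ENNReal.ofReal_eq_zero.2 this]
        simp
    rw [hA, hB]
    rcases le_or_gt x 1 with h | h
    · rw [min_eq_left h]; ring
    · have hfx : f x = 0 := by
        by_contra hne
        exact absurd (hfs hne).2 (not_le.2 h)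
      rw [hfx]; ring
  rw [setIntegral_congr_fun measurableSet_Ioi key]
  rw [integral_sub (((integrable_mul_glob hfm hfb hfs).restrict).const_mul 2)
    ((integrable_glob hfm hfb hfs).restrict), integral_const_mul]

lemma I_pos {f : ℝ → ℝ} (hfm : Measurable f) (hfb : ∃ C, ∀ x, |f x| ≤ C)
    (hfs : Function.support f ⊆ Icc 0 1) (hpos : ∀ x, 0 ≤ f x)
    (hne : ¬ f =ᵐ[volume] (0 : ℝ → ℝ)) : 0 < ∫ t in Ioi (0:ℝ), f t := by
  rw [integral_pos_iff_support_of_nonneg hpos (integrable_glob hfm hfb hfs).restrict]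
  rw [Measure.restrict_apply' measurableSet_Ioi]
  by_contra h
  push_neg at h
  have h0 : volume (Function.support f ∩ Ioi 0) = 0 := le_antisymm (by exact h) zero_le
  have hsub : Function.support f ⊆ (Function.support f ∩ Ioi 0) ∪ {0} := by
    intro x hx
    rcases lt_or_eq_of_le (hfs hx).1 with h1 | h1
    · exact Or.inl ⟨hx, h1⟩
    · exact Or.inr (by simp [← h1])
  have hz : volume (Function.support f) = 0 := by
    refine measure_mono_null hsub ?_
    refine le_antisymm ?_ zero_le
    calc volume ((Function.support f ∩ Ioi 0) ∪ {0})
        ≤ volume (Function.support f ∩ Ioi 0) + volume ({0} : Set ℝ) := measure_union_le _ _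
      _ = 0 := by rw [h0, Real.volume_singleton, add_zero]
  exact hne (by rw [Filter.EventuallyEq, ae_iff]; simpa [Function.support] using hz)

lemma not_ae_zero_of_integral_pos {g : ℝ → ℝ}
    (h : 0 < ∫ t in Ioi (0:ℝ), g t) : ¬ g =ᵐ[volume] (0 : ℝ → ℝ) := by
  intro hae
  have : (∫ t in Ioi (0:ℝ), g t) = 0 := integral_eq_zero_of_ae (ae_restrict_of_ae hae)
  rw [this] at h
  exact lt_irrefl 0 h



lemma F_diff {f : ℝ → ℝ} (hIf : Integrable f volume) {a b : ℝ} (h0 : 0 ≤ a) (hab : a ≤ b) :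
    ∫ t in Ioc a b, f t = (∫ t in Ioc (0:ℝ) b, f t) - ∫ t in Ioc (0:ℝ) a, f t := by
  have h := setIntegral_union (f := f) (μ := volume)
    (s := Ioc (0:ℝ) a) (t := Ioc a b) (Set.Ioc_disjoint_Ioc_of_le le_rfl)
    measurableSet_Ioc hIf.integrableOn hIf.integrableOn
  rw [Set.Ioc_union_Ioc_eq_Ioc h0 hab] at h
  rw [h]; ring

lemma ae_const_of_primitive {f : ℝ → ℝ} (hIf : Integrable f volume) {I : ℝ}
    (hall : ∀ a ∈ Icc (0:ℝ) 1, (∫ t in Ioc (0:ℝ) a, f t) = a * I) :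
    ∀ᵐ x ∂(volume.restrict (Icc (0:ℝ) 1)), f x = I := by
  have hld := IsUnifLocDoublingMeasure.ae_tendsto_average (μ := volume)
    hIf.locallyIntegrable 1
  rw [ae_restrict_iff' measurableSet_Icc]
  have h0 : ∀ᵐ x : ℝ, x ≠ (0:ℝ) := by
    rw [ae_iff]; simpa using Real.volume_singleton (x := (0:ℝ))
  have h1 : ∀ᵐ x : ℝ, x ≠ (1:ℝ) := by
    rw [ae_iff]; simpa using Real.volume_singleton (x := (1:ℝ))
  filter_upwards [hld, h0, h1] with x hx hx0 hx1 hxmem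
  have hxI : x ∈ Ioo (0:ℝ) 1 :=
    ⟨lt_of_le_of_ne hxmem.1 (Ne.symm hx0), lt_of_le_of_ne hxmem.2 hx1⟩
  set m := min x (1 - x) with hm
  have hmpos : 0 < m := lt_min hxI.1 (by linarith [hxI.2])
  have hT : Tendsto (fun r : ℝ => ⨍ y in Metric.closedBall x r, f y) (𝓝[>] (0:ℝ))
      (𝓝 (f x)) := by
    refine hx (fun _ => x) (fun r => r) tendsto_id ?_
    filter_upwards [self_mem_nhdsWithin] with r hr
    have : (0:ℝ) < r := hr
    exact Metric.mem_closedBall_self (by linarith)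
  have hconst : (fun r : ℝ => ⨍ y in Metric.closedBall x r, f y)
      =ᶠ[𝓝[>] (0:ℝ)] (fun _ => I) := by
    filter_upwards [Ioo_mem_nhdsGT_of_mem (⟨le_refl (0:ℝ), hmpos⟩ : (0:ℝ) ∈ Ico (0:ℝ) m)]
      with r hr
    have hr0 : (0:ℝ) < r := hr.1
    have hrm : r < m := hr.2
    have hga : 0 ≤ x - r := by
      have := min_le_left x (1 - x); rw [← hm] at this; linarith
    have hgb : x + r ≤ 1 := by
      have := min_le_right x (1 - x); rw [← hm] at this; linarith
    have hib : ∫ y in Metric.closedBall x r, f y = 2 * r * I := by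
      rw [Real.closedBall_eq_Icc, integral_Icc_eq_integral_Ioc,
        F_diff hIf hga (by linarith), hall _ ⟨hga, by linarith⟩,
        hall _ ⟨by linarith, hgb⟩]
      ring
    rw [setAverage_eq, hib, measureReal_def, Real.volume_closedBall, ENNReal.toReal_ofReal (by linarith),
      smul_eq_mul]
    field_simp
  have hT2 : Tendsto (fun r : ℝ => ⨍ y in Metric.closedBall x r, f y) (𝓝[>] (0:ℝ))
      (𝓝 I) := Tendsto.congr' hconst.symm tendsto_const_nhds
  exact tendsto_nhds_unique hT hT2

lemma two_block {f : ℝ → ℝ}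
    (hfm : Measurable f) (hfb : ∃ C, ∀ x, |f x| ≤ C) (hfs : Function.support f ⊆ Icc 0 1)
    (c₁ s₁ t₁ c₂ s₂ t₂ : ℝ)
    (hc₁ : 0 ≤ c₁) (hc₂ : 0 ≤ c₂) (hs₁ : 0 ≤ s₁) (ht₁ : s₁ ≤ t₁) (ht₁' : t₁ ≤ 1)
    (hs₂ : 0 ≤ s₂) (ht₂ : s₂ ≤ t₂) (ht₂' : t₂ ≤ 1) :
    Measurable (fun x => (Ioc s₁ t₁).indicator (fun _ => c₁) x
        + (Ioc s₂ t₂).indicator (fun _ => c₂) x)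
    ∧ (∀ x, 0 ≤ (Ioc s₁ t₁).indicator (fun _ => c₁) x
        + (Ioc s₂ t₂).indicator (fun _ => c₂) x)
    ∧ (∀ x, (Ioc s₁ t₁).indicator (fun _ => c₁) x
        + (Ioc s₂ t₂).indicator (fun _ => c₂) x ≤ c₁ + c₂)
    ∧ Function.support (fun x => (Ioc s₁ t₁).indicator (fun _ => c₁) x
        + (Ioc s₂ t₂).indicator (fun _ => c₂) x) ⊆ Icc 0 1
    ∧ (∫ x in Ioi (0:ℝ), ((Ioc s₁ t₁).indicator (fun _ => c₁) x
        + (Ioc s₂ t₂).indicator (fun _ => c₂) x) = c₁ * (t₁ - s₁) + c₂ * (t₂ - s₂))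
    ∧ (∫ x in Ioi (0:ℝ), x * ((Ioc s₁ t₁).indicator (fun _ => c₁) x
        + (Ioc s₂ t₂).indicator (fun _ => c₂) x)
        = c₁ * (t₁^2 - s₁^2) / 2 + c₂ * (t₂^2 - s₂^2) / 2)
    ∧ wp f (fun x => (Ioc s₁ t₁).indicator (fun _ => c₁) x
        + (Ioc s₂ t₂).indicator (fun _ => c₂) x)
      = c₁ * (∫ u in Ioc s₁ t₁,
            ((∫ t in Ioi (0:ℝ), f t) - 2 * ∫ t in Ioc (0:ℝ) u, f t))
        + c₂ * ∫ u in Ioc s₂ t₂,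
            ((∫ t in Ioi (0:ℝ), f t) - 2 * ∫ t in Ioc (0:ℝ) u, f t) := by
  have hb1 : ∀ x, 0 ≤ (Ioc s₁ t₁).indicator (fun _ => c₁) x :=
    fun x => Set.indicator_nonneg (fun _ _ => hc₁) x
  have hb2 : ∀ x, 0 ≤ (Ioc s₂ t₂).indicator (fun _ => c₂) x :=
    fun x => Set.indicator_nonneg (fun _ _ => hc₂) x
  have hub1 : ∀ x, (Ioc s₁ t₁).indicator (fun _ => c₁) x ≤ c₁ := fun x =>
    le_trans (le_abs_self _) (by simpa [abs_of_nonneg hc₁] using blk_abs c₁ s₁ t₁ x)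
  have hub2 : ∀ x, (Ioc s₂ t₂).indicator (fun _ => c₂) x ≤ c₂ := fun x =>
    le_trans (le_abs_self _) (by simpa [abs_of_nonneg hc₂] using blk_abs c₂ s₂ t₂ x)
  have hgm : Measurable (fun x => (Ioc s₁ t₁).indicator (fun _ => c₁) x
      + (Ioc s₂ t₂).indicator (fun _ => c₂) x) := (blk_meas c₁ s₁ t₁).add (blk_meas c₂ s₂ t₂)
  have hgb : ∃ C, ∀ x, |(Ioc s₁ t₁).indicator (fun _ => c₁) x
      + (Ioc s₂ t₂).indicator (fun _ => c₂) x| ≤ C := by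
    refine ⟨c₁ + c₂, fun x => ?_⟩
    rw [abs_of_nonneg (add_nonneg (hb1 x) (hb2 x))]
    exact add_le_add (hub1 x) (hub2 x)
  have hgs : Function.support (fun x => (Ioc s₁ t₁).indicator (fun _ => c₁) x
      + (Ioc s₂ t₂).indicator (fun _ => c₂) x) ⊆ Icc 0 1 := by
    refine subset_trans (Function.support_add _ _) ?_
    exact Set.union_subset (blk_supp c₁ s₁ t₁ hs₁ ht₁') (blk_supp c₂ s₂ t₂ hs₂ ht₂')
  have hint1 : Integrable ((Ioc s₁ t₁).indicator (fun _ => c₁)) volume :=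
    integrable_glob (blk_meas c₁ s₁ t₁) ⟨|c₁|, blk_abs c₁ s₁ t₁⟩ (blk_supp c₁ s₁ t₁ hs₁ ht₁')
  have hint2 : Integrable ((Ioc s₂ t₂).indicator (fun _ => c₂)) volume :=
    integrable_glob (blk_meas c₂ s₂ t₂) ⟨|c₂|, blk_abs c₂ s₂ t₂⟩ (blk_supp c₂ s₂ t₂ hs₂ ht₂')
  refine ⟨hgm, fun x => add_nonneg (hb1 x) (hb2 x),
    fun x => add_le_add (hub1 x) (hub2 x), hgs, ?_, ?_, ?_⟩
  · rw [integral_add hint1.restrict hint2.restrict,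
      integral_blk c₁ s₁ t₁ hs₁ ht₁, integral_blk c₂ s₂ t₂ hs₂ ht₂]
  · have hpt : ∀ x : ℝ, x * ((Ioc s₁ t₁).indicator (fun _ => c₁) x
        + (Ioc s₂ t₂).indicator (fun _ => c₂) x)
        = x * (Ioc s₁ t₁).indicator (fun _ => c₁) x
          + x * (Ioc s₂ t₂).indicator (fun _ => c₂) x := fun x => by ring
    simp_rw [hpt]
    rw [integral_add
      ((integrable_mul_glob (blk_meas c₁ s₁ t₁) ⟨|c₁|, blk_abs c₁ s₁ t₁⟩
        (blk_supp c₁ s₁ t₁ hs₁ ht₁')).restrict)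
      ((integrable_mul_glob (blk_meas c₂ s₂ t₂) ⟨|c₂|, blk_abs c₂ s₂ t₂⟩
        (blk_supp c₂ s₂ t₂ hs₂ ht₂')).restrict),
      integral_id_blk c₁ s₁ t₁ hs₁ ht₁, integral_id_blk c₂ s₂ t₂ hs₂ ht₂]
  · rw [master hfm hfb hfs hgm hgb hgs]
    have hφm : Measurable (fun u => (∫ t in Ioi (0:ℝ), f t)
        - 2 * ∫ t in Ioc (0:ℝ) u, f t) :=
      (measurable_const.sub ((continuous_primitive hfm hfb hfs).measurable.const_mul 2))
    obtain ⟨Mf, hMf⟩ := bounded_primitive hfm hfb hfs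
    have hφb : ∀ u, |(∫ t in Ioi (0:ℝ), f t) - 2 * ∫ t in Ioc (0:ℝ) u, f t|
        ≤ |∫ t in Ioi (0:ℝ), f t| + 2 * Mf := by
      intro u
      have h := hMf u
      rw [Real.norm_eq_abs] at h
      calc |(∫ t in Ioi (0:ℝ), f t) - 2 * ∫ t in Ioc (0:ℝ) u, f t|
          ≤ |∫ t in Ioi (0:ℝ), f t| + |2 * ∫ t in Ioc (0:ℝ) u, f t| := abs_sub _ _
        _ ≤ |∫ t in Ioi (0:ℝ), f t| + 2 * Mf := by
            rw [abs_mul]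
            simp only [abs_two]
            nlinarith [abs_nonneg (∫ t in Ioc (0:ℝ) u, f t)]
    have hpt : ∀ u : ℝ, ((Ioc s₁ t₁).indicator (fun _ => c₁) u
        + (Ioc s₂ t₂).indicator (fun _ => c₂) u)
          * ((∫ t in Ioi (0:ℝ), f t) - 2 * ∫ t in Ioc (0:ℝ) u, f t)
        = (Ioc s₁ t₁).indicator (fun _ => c₁) u
            * ((∫ t in Ioi (0:ℝ), f t) - 2 * ∫ t in Ioc (0:ℝ) u, f t)
          + (Ioc s₂ t₂).indicator (fun _ => c₂) u
            * ((∫ t in Ioi (0:ℝ), f t) - 2 * ∫ t in Ioc (0:ℝ) u, f t) := fun u => by ring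
    simp_rw [hpt]
    have hintmul : ∀ (c s t : ℝ), 0 ≤ s → s ≤ t → t ≤ 1 →
        Integrable (fun u => (Ioc s t).indicator (fun _ => c) u
          * ((∫ t in Ioi (0:ℝ), f t) - 2 * ∫ t in Ioc (0:ℝ) u, f t)) volume := by
      intro c s t h0 hst ht1
      refine integrable_glob ((blk_meas c s t).mul hφm)
        ⟨|c| * (|∫ t in Ioi (0:ℝ), f t| + 2 * Mf), fun x => ?_⟩ ?_
      · rw [abs_mul]
        have h1 := blk_abs c s t x
        have h2 := hφb x
        have h3 := abs_nonneg ((Ioc s t).indicator (fun _ => c) x)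
        have h4 := abs_nonneg ((∫ t in Ioi (0:ℝ), f t) - 2 * ∫ t in Ioc (0:ℝ) x, f t)
        nlinarith [abs_nonneg c]
      · intro x hx
        refine blk_supp c s t h0 ht1 ?_
        simp only [Function.mem_support] at hx ⊢
        exact fun h => hx (by rw [h, zero_mul])
    rw [integral_add (hintmul c₁ s₁ t₁ hs₁ ht₁ ht₁').restrict
        (hintmul c₂ s₂ t₂ hs₂ ht₂ ht₂').restrict,
      integral_blk_mul c₁ s₁ t₁ hs₁ ht₁, integral_blk_mul c₂ s₂ t₂ hs₂ ht₂]


end Stmt10Aux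

open Stmt10Aux in
set_option maxHeartbeats 1000000 in
theorem stmt10 (f : ℝ → ℝ) (hf : IsStrategy f)
    (hsupp : Function.support f ⊆ Icc (0:ℝ) 1) (hmca : mca f ≤ 1/2)
    (hnc : ¬ ∃ c : ℝ, ∀ᵐ x ∂(volume.restrict (Icc (0:ℝ) 1)), f x = c) :
    ∃ g : ℝ → ℝ, IsStrategy g ∧ Function.support g ⊆ Icc (0:ℝ) 1 ∧
      mca g ≤ 1/2 ∧ wp f g < 0 := by
  obtain ⟨hfm, ⟨Cb, hCb⟩, hfpos, -, hfne⟩ := hf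
  have hfb : ∃ C, ∀ x, |f x| ≤ C :=
    ⟨Cb, fun x => by rw [abs_of_nonneg (hfpos x)]; exact hCb x⟩
  have hIf : Integrable f volume := integrable_glob hfm hfb hsupp
  have hIpos : 0 < ∫ t in Ioi (0:ℝ), f t := I_pos hfm hfb hsupp hfpos hfne
  have hJle : (∫ t in Ioi (0:ℝ), t * f t) ≤ (∫ t in Ioi (0:ℝ), f t) / 2 := by
    rw [mca, div_le_iff₀ hIpos] at hmca
    linarith
  have hFcont : Continuous (fun a => ∫ t in Ioc (0:ℝ) a, f t) :=
    continuous_primitive hfm hfb hsupp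
  have hF0 : (∫ t in Ioc (0:ℝ) (0:ℝ), f t) = 0 := by simp
  have hF1 : (∫ t in Ioc (0:ℝ) (1:ℝ), f t) = ∫ t in Ioi (0:ℝ), f t := by
    have hsp := split_Ioi hfm hfb hsupp (one_pos : (0:ℝ) < 1)
    have htail : (∫ t in Ioi (1:ℝ), f t) = 0 := by
      have hz : ∀ x ∈ Ioi (1:ℝ), f x = (0:ℝ) := fun x hx => by
        by_contra hne; exact absurd (hsupp hne).2 (not_le.2 hx)
      rw [setIntegral_congr_fun measurableSet_Ioi hz]; simp
    rw [htail, add_zero] at hsp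
    exact hsp.symm
  rcases lt_or_eq_of_le hJle with hJlt | hJeq
  · -- case 1 : strict mean, beaten by the uniform strategy
    refine ⟨(Ioc (0:ℝ) 1).indicator (fun _ => (1:ℝ)), ?_, blk_supp 1 0 1 le_rfl le_rfl, ?_, ?_⟩
    · refine ⟨blk_meas 1 0 1, ⟨1, fun x => by simpa using (abs_le.1 (blk_abs 1 0 1 x)).2⟩,
        fun x => Set.indicator_nonneg (fun _ _ => zero_le_one) x,
        ⟨1, blk_supp 1 0 1 le_rfl le_rfl⟩, not_ae_zero_of_integral_pos ?_⟩
      rw [integral_blk 1 0 1 le_rfl zero_le_one]; norm_num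
    · rw [mca, integral_blk 1 0 1 le_rfl zero_le_one, integral_id_blk 1 0 1 le_rfl zero_le_one]
      norm_num
    · rw [wp_unif hfm hfb hsupp]; linarith
  · -- case 2 : mean exactly 1/2
    by_cases hall : ∀ a ∈ Icc (0:ℝ) 1,
        (∫ t in Ioc (0:ℝ) a, f t) ≤ a * ∫ t in Ioi (0:ℝ), f t
    · -- then f is a.e. constant: contradiction
      exfalso
      have hmEq := master hfm hfb hsupp (blk_meas 1 0 1) ⟨1, fun x => by simpa using blk_abs 1 0 1 x⟩
        (blk_supp 1 0 1 le_rfl le_rfl)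
      rw [wp_unif hfm hfb hsupp, integral_blk_mul 1 0 1 le_rfl zero_le_one, one_mul] at hmEq
      have hsub : (∫ u in Ioc (0:ℝ) 1,
          ((∫ t in Ioi (0:ℝ), f t) - 2 * ∫ t in Ioc (0:ℝ) u, f t))
          = (∫ t in Ioi (0:ℝ), f t) - 2 * ∫ u in Ioc (0:ℝ) 1, (∫ t in Ioc (0:ℝ) u, f t) := by
        rw [integral_sub (g := fun u => 2 * ∫ t in Ioc (0:ℝ) u, f t) (integrableOn_const (s := Ioc (0:ℝ) 1) (μ := volume)
            (C := ∫ t in Ioi (0:ℝ), f t) (by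
            rw [Real.volume_Ioc]; exact ENNReal.ofReal_ne_top))
          ((continuous_const.mul hFcont).integrableOn_Ioc), setIntegral_const, measureReal_def, Real.volume_Ioc,
          ENNReal.toReal_ofReal (by norm_num), integral_const_mul]
        norm_num
      rw [hsub] at hmEq
      have hFint : (∫ u in Ioc (0:ℝ) 1, (∫ t in Ioc (0:ℝ) u, f t))
          = (∫ t in Ioi (0:ℝ), f t) - (∫ t in Ioi (0:ℝ), t * f t) := by linarith
      set D : ℝ → ℝ := fun a => a * (∫ t in Ioi (0:ℝ), f t) - ∫ t in Ioc (0:ℝ) a, f t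
        with hD
      have hDcont : Continuous D := (continuous_id.mul continuous_const).sub hFcont
      have hDint : (∫ a in Ioc (0:ℝ) 1, D a) = 0 := by
        have hid : Continuous fun a : ℝ => a * ∫ t in Ioi (0:ℝ), f t := by fun_prop
        have e : (∫ a in Ioc (0:ℝ) 1, D a)
            = (∫ a in Ioc (0:ℝ) 1, a * ∫ t in Ioi (0:ℝ), f t)
              - ∫ a in Ioc (0:ℝ) 1, (∫ t in Ioc (0:ℝ) a, f t) :=
          integral_sub hid.integrableOn_Ioc hFcont.integrableOn_Ioc
        rw [e, integral_mul_const, hFint, ← intervalIntegral.integral_of_le zero_le_one,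
          integral_id]
        norm_num
        linarith [hJeq]
      have hDae : ∀ᵐ a ∂volume.restrict (Ioc (0:ℝ) 1), D a = 0 := by
        have hnn : 0 ≤ᵐ[volume.restrict (Ioc (0:ℝ) 1)] D :=
          (ae_restrict_iff' measurableSet_Ioc).2 (Eventually.of_forall fun a ha =>
            sub_nonneg.2 (hall a ⟨ha.1.le, ha.2⟩))
        exact (integral_eq_zero_iff_of_nonneg_ae hnn
          hDcont.integrableOn_Ioc).1 hDint
      have hD0 : ∀ a ∈ Icc (0:ℝ) 1, D a = 0 := by
        intro a ha
        by_contra hne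
        have hpos : 0 < D a := lt_of_le_of_ne (sub_nonneg.2 (hall a ha)) (Ne.symm hne)
        obtain ⟨δ, hδpos, hδ⟩ := Metric.continuousAt_iff.1 (hDcont.continuousAt (x := a))
          (D a / 2) (half_pos hpos)
        set a' := max (a - δ) 0 with ha'
        set b' := min (a + δ) 1 with hb'
        have hab : a' < b' := by
          rw [ha', hb']
          apply max_lt <;> [skip; skip] <;> apply lt_min <;>
            first
              | linarith [ha.1, ha.2]
              | norm_num
        have hsubset : Ioo a' b' ⊆ {y | ¬ (y ∈ Ioc (0:ℝ) 1 → D y = 0)} := by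
          intro y hy
          have hy1 : 0 < y := lt_of_le_of_lt (le_max_right _ _) hy.1
          have hy2 : y ≤ 1 := le_of_lt (lt_of_lt_of_le hy.2 (min_le_right _ _))
          have hyd : dist y a < δ := by
            rw [Real.dist_eq, abs_lt]
            constructor
            · have := lt_of_le_of_lt (le_max_left _ _) hy.1; linarith
            · have := lt_of_lt_of_le hy.2 (min_le_left _ _); linarith
          have := hδ hyd
          rw [Real.dist_eq, abs_lt] at this
          intro hcon
          have hDy := hcon ⟨hy1, hy2⟩
          rw [hDy] at this
          linarith [this.1, this.2]
        rw [ae_restrict_iff' measurableSet_Ioc, ae_iff] at hDae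
        have : volume (Ioo a' b') = 0 := measure_mono_null hsubset hDae
        rw [Real.volume_Ioo] at this
        have : b' - a' ≤ 0 := by
          by_contra hcon
          push_neg at hcon
          rw [ENNReal.ofReal_eq_zero] at this
          linarith
        linarith
      have hFeq : ∀ a ∈ Icc (0:ℝ) 1,
          (∫ t in Ioc (0:ℝ) a, f t) = a * ∫ t in Ioi (0:ℝ), f t := by
        intro a ha
        have h2 : a * (∫ t in Ioi (0:ℝ), f t) - (∫ t in Ioc (0:ℝ) a, f t) = 0 := hD0 a ha
        linarith
      exact hnc ⟨∫ t in Ioi (0:ℝ), f t, ae_const_of_primitive hIf hFeq⟩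
    · -- construction of the beating strategy
      push_neg at hall
      obtain ⟨a₀, ha₀, hFa₀⟩ := hall
      have ha₀0 : 0 < a₀ := by
        rcases lt_or_eq_of_le ha₀.1 with h | h
        · exact h
        · exfalso; rw [← h, hF0] at hFa₀; simp at hFa₀
      have ha₀1 : a₀ < 1 := by
        rcases lt_or_eq_of_le ha₀.2 with h | h
        · exact h
        · exfalso; rw [h, hF1] at hFa₀; linarith
      set η : ℝ := (∫ t in Ioc (0:ℝ) a₀, f t) - a₀ * ∫ t in Ioi (0:ℝ), f t with hη
      have hηpos : 0 < η := sub_pos.2 hFa₀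
      set φ : ℝ → ℝ := fun u => (∫ t in Ioi (0:ℝ), f t) - 2 * ∫ t in Ioc (0:ℝ) u, f t
        with hφ
      have hφcont : Continuous φ := continuous_const.sub (continuous_const.mul hFcont)
      have hφa : φ a₀ = (1 - 2*a₀) * (∫ t in Ioi (0:ℝ), f t) - 2 * η := by
        rw [hφ, hη]; ring
      have hφ0 : φ 0 = ∫ t in Ioi (0:ℝ), f t := by rw [hφ]; simp
      have hφ1 : φ 1 = -(∫ t in Ioi (0:ℝ), f t) := by
        simp only [hφ]; rw [hF1]; ring
      obtain ⟨δa, hδa, hda⟩ := Metric.continuousAt_iff.1 (hφcont.continuousAt (x := a₀))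
        (η/2) (by positivity)
      obtain ⟨δ0, hδ0, hd0⟩ := Metric.continuousAt_iff.1 (hφcont.continuousAt (x := 0))
        (η/2) (by positivity)
      obtain ⟨δ1, hδ1, hd1⟩ := Metric.continuousAt_iff.1 (hφcont.continuousAt (x := 1))
        (η/2) (by positivity)
      set ε : ℝ := min (min (δa/2) (δ0/2)) (min (δ1/2) (min (a₀/2) (1 - a₀))) with hε
      have h1a : 0 < 1 - a₀ := by linarith
      have hεpos : 0 < ε := by positivity
      have hεδa : ε < δa :=
        lt_of_le_of_lt (le_trans (min_le_left _ _) (min_le_left _ _)) (by linarith)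
      have hεδ0 : ε < δ0 :=
        lt_of_le_of_lt (le_trans (min_le_left _ _) (min_le_right _ _)) (by linarith)
      have hεδ1 : ε < δ1 :=
        lt_of_le_of_lt (le_trans (min_le_right _ _) (min_le_left _ _)) (by linarith)
      have hεa : ε ≤ a₀/2 :=
        le_trans (min_le_right _ _) (le_trans (min_le_right _ _) (min_le_left _ _))
      have hεb : ε ≤ 1 - a₀ :=
        le_trans (min_le_right _ _) (le_trans (min_le_right _ _) (min_le_right _ _))
      have hba : ∀ y ∈ Icc (a₀ - ε) a₀, φ y ≤ φ a₀ + η/2 := by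
        intro y hy
        have hd : dist y a₀ < δa := by
          rw [Real.dist_eq, abs_lt]
          constructor
          · linarith [hy.1]
          · linarith [hy.2]
        have h2 := hda hd
        rw [Real.dist_eq, abs_lt] at h2
        linarith [h2.2]
      have hb0 : ∀ y ∈ Icc (0:ℝ) ε, φ y ≤ φ 0 + η/2 := by
        intro y hy
        have hd : dist y 0 < δ0 := by
          rw [Real.dist_eq, sub_zero, abs_lt]
          constructor
          · linarith [hy.1]
          · linarith [hy.2]
        have h2 := hd0 hd
        rw [Real.dist_eq, abs_lt] at h2
        linarith [h2.2]
      have hb1 : ∀ y ∈ Icc (1 - ε) 1, φ y ≤ φ 1 + η/2 := by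
        intro y hy
        have hd : dist y 1 < δ1 := by
          rw [Real.dist_eq, abs_lt]
          constructor
          · linarith [hy.1]
          · linarith [hy.2]
        have h2 := hd1 hd
        rw [Real.dist_eq, abs_lt] at h2
        linarith [h2.2]
      rcases le_or_gt a₀ (1/2 : ℝ) with hao | hao
      · -- a₀ ≤ 1/2 : block at a₀ plus block at 1 with weight 1 - 2a₀
        obtain ⟨hgm, hgnn, hgub, hgsupp, hgint, hgxint, hgwp⟩ :=
          two_block hfm hfb hsupp 1 (a₀ - ε) a₀ (1 - 2*a₀) (1 - ε) 1
            zero_le_one (by linarith) (by linarith) (by linarith) (by linarith)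
            (by linarith) (by linarith) le_rfl
        have hden : (0:ℝ) < 1 * (a₀ - (a₀ - ε)) + (1 - 2*a₀) * (1 - (1 - ε)) := by nlinarith
        refine ⟨_, ⟨hgm, ⟨1 + (1 - 2*a₀), hgub⟩, hgnn, ⟨1, hgsupp⟩,
          not_ae_zero_of_integral_pos (by rw [hgint]; exact hden)⟩, hgsupp, ?_, ?_⟩
        · rw [mca, hgxint, hgint, div_le_iff₀ hden]
          nlinarith
        · rw [hgwp]
          have h1 : (∫ u in Ioc (a₀ - ε) a₀, φ u) ≤ ε * (φ a₀ + η/2) := by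
            have := integral_blk_le (a₀ - ε) a₀ (φ a₀ + η/2) (by linarith) hφcont hba
            rw [show a₀ - (a₀ - ε) = ε by ring] at this
            exact this
          have h2 : (∫ u in Ioc (1 - ε) 1, φ u) ≤ ε * (φ 1 + η/2) := by
            have := integral_blk_le (1 - ε) 1 (φ 1 + η/2) (by linarith) hφcont hb1
            rw [show (1:ℝ) - (1 - ε) = ε by ring] at this
            exact this
          have h2' : (1 - 2*a₀) * (∫ u in Ioc (1 - ε) 1, φ u)
              ≤ (1 - 2*a₀) * (ε * (φ 1 + η/2)) :=
            mul_le_mul_of_nonneg_left h2 (by linarith)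
          rw [hφa] at h1
          rw [hφ1] at h2'
          nlinarith [mul_pos hεpos hηpos, ha₀0.le, hao]
      · -- a₀ > 1/2 : block near 0 with weight 2a₀ - 1 plus block at a₀
        obtain ⟨hgm, hgnn, hgub, hgsupp, hgint, hgxint, hgwp⟩ :=
          two_block hfm hfb hsupp (2*a₀ - 1) 0 ε 1 (a₀ - ε) a₀
            (by linarith) zero_le_one le_rfl (by linarith) (by linarith)
            (by linarith) (by linarith) (by linarith)
        have hden : (0:ℝ) < (2*a₀ - 1) * (ε - 0) + 1 * (a₀ - (a₀ - ε)) := by nlinarith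
        refine ⟨_, ⟨hgm, ⟨(2*a₀ - 1) + 1, hgub⟩, hgnn, ⟨1, hgsupp⟩,
          not_ae_zero_of_integral_pos (by rw [hgint]; exact hden)⟩, hgsupp, ?_, ?_⟩
        · rw [mca, hgxint, hgint, div_le_iff₀ hden]
          nlinarith
        · rw [hgwp]
          have h1 : (∫ u in Ioc (0:ℝ) ε, φ u) ≤ ε * (φ 0 + η/2) := by
            have := integral_blk_le 0 ε (φ 0 + η/2) (by linarith) hφcont hb0
            rw [show ε - (0:ℝ) = ε by ring] at this
            exact this
          have h1' : (2*a₀ - 1) * (∫ u in Ioc (0:ℝ) ε, φ u)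
              ≤ (2*a₀ - 1) * (ε * (φ 0 + η/2)) :=
            mul_le_mul_of_nonneg_left h1 (by linarith)
          have h2 : (∫ u in Ioc (a₀ - ε) a₀, φ u) ≤ ε * (φ a₀ + η/2) := by
            have := integral_blk_le (a₀ - ε) a₀ (φ a₀ + η/2) (by linarith) hφcont hba
            rw [show a₀ - (a₀ - ε) = ε by ring] at this
            exact this
          rw [hφ0] at h1'
          rw [hφa] at h2
          nlinarith [mul_pos hεpos hηpos, ha₀1]
end

section
/- Fix a constraint value C ∈ (0, 1/2) and restrict the bounded measurable game to strategies supported in [0, 1]. A strategy f with mca(f) ≤ C satisfies wp(f; g) ≥ 0 for every strategy g supported in [0, 1] with mca(g) ≤ C if and only if there exists a constant a > 0 such that f is almost everywhere equal to a on [0, 2C] and almost everywhere equal to 0 on (2C, 1]. -/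
open MeasureTheory Set

open Filter Topology

lemma integrable_of_supp_bdd {φ : ℝ → ℝ} (hm : Measurable φ)
    (hs : Function.support φ ⊆ Icc 0 1) {M : ℝ} (hb : ∀ x ∈ Icc (0:ℝ) 1, |φ x| ≤ M) :
    Integrable φ := by
  have h1 : φ = (Icc (0:ℝ) 1).indicator φ := by
    ext x
    by_cases hx : x ∈ Icc (0:ℝ) 1
    · simp [hx]
    · simp [hx]
      by_contra h
      exact hx (hs h)
  rw [h1, integrable_indicator_iff measurableSet_Icc]
  apply Measure.integrableOn_of_bounded (M := M)
  · simp [lt_top_iff_ne_top]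
  · exact hm.aestronglyMeasurable
  · exact (ae_restrict_iff' measurableSet_Icc).2 (ae_of_all _ (fun x hx => by
      simpa [Real.norm_eq_abs] using hb x hx))

lemma swap_lemma {f g : ℝ → ℝ} (hmf : Measurable f) (hmg : Measurable g)
    (hsf : Function.support f ⊆ Icc 0 1) (hsg : Function.support g ⊆ Icc 0 1)
    {Cf Cg : ℝ} (hbf : ∀ x, |f x| ≤ Cf) (hbg : ∀ x, |g x| ≤ Cg)
    (hif : Integrable f) :
    ∫ x in Ioi (0:ℝ), f x * (∫ t in Ioc (0:ℝ) x, g t)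
      = ∫ t in Ioi (0:ℝ), g t * ((∫ s in Ioi (0:ℝ), f s) - ∫ s in Ioc (0:ℝ) t, f s) := by
  set μ := volume.restrict (Ioi (0:ℝ)) with hμ
  have hDmeas : MeasurableSet {p : ℝ × ℝ | p.2 ≤ p.1} :=
    measurableSet_le measurable_snd measurable_fst
  set Φ : ℝ × ℝ → ℝ := {p : ℝ × ℝ | p.2 ≤ p.1}.indicator (fun p => f p.1 * g p.2) with hΦ
  have hΦmeas : Measurable Φ :=
    ((hmf.comp measurable_fst).mul (hmg.comp measurable_snd)).indicator hDmeas
  -- integrability on the product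
  have hint : Integrable Φ (μ.prod μ) := by
    have hbox : (μ.prod μ) (Icc (0:ℝ) 1 ×ˢ Icc (0:ℝ) 1) < ⊤ := by
      rw [Measure.prod_prod]
      have h1 : μ (Icc (0:ℝ) 1) ≤ 1 := by
        rw [hμ, Measure.restrict_apply measurableSet_Icc]
        calc volume (Icc (0:ℝ) 1 ∩ Ioi 0) ≤ volume (Icc (0:ℝ) 1) :=
              measure_mono inter_subset_left
        _ = 1 := by simp
      calc μ (Icc (0:ℝ) 1) * μ (Icc (0:ℝ) 1) ≤ 1 * 1 := mul_le_mul' h1 h1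
      _ = 1 := by simp
      _ < ⊤ := by simp
    have hCf0 : (0:ℝ) ≤ Cf := (abs_nonneg (f 0)).trans (hbf 0)
    have hCg0 : (0:ℝ) ≤ Cg := (abs_nonneg (g 0)).trans (hbg 0)
    have hCnn : (0:ℝ) ≤ Cf * Cg := mul_nonneg hCf0 hCg0
    refine Integrable.mono' (g := (Icc (0:ℝ) 1 ×ˢ Icc (0:ℝ) 1).indicator (fun _ => Cf * Cg))
      ?_ hΦmeas.aestronglyMeasurable (ae_of_all _ ?_)
    · rw [integrable_indicator_iff (measurableSet_Icc.prod measurableSet_Icc)]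
      exact integrableOn_const hbox.ne
    · intro p
      by_cases hp : p ∈ Icc (0:ℝ) 1 ×ˢ Icc (0:ℝ) 1
      · rw [indicator_of_mem hp]
        calc ‖Φ p‖
            ≤ ‖f p.1 * g p.2‖ := norm_indicator_le_norm_self _ _
        _ = |f p.1| * |g p.2| := abs_mul _ _
        _ ≤ Cf * Cg := mul_le_mul (hbf p.1) (hbg p.2) (abs_nonneg (g p.2)) hCf0
      · rw [indicator_of_notMem hp]
        have hp' : ¬(p.1 ∈ Icc (0:ℝ) 1 ∧ p.2 ∈ Icc (0:ℝ) 1) := by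
          rwa [Set.mem_prod] at hp
        have h0 : f p.1 * g p.2 = 0 := by
          rcases not_and_or.1 hp' with h | h
          · have hf0 : f p.1 = 0 := by
              by_contra hne; exact h (hsf hne)
            rw [hf0, zero_mul]
          · have hg0 : g p.2 = 0 := by
              by_contra hne; exact h (hsg hne)
            rw [hg0, mul_zero]
        have hΦ0 : Φ p = 0 := by
          rw [hΦ]
          by_cases hd : p ∈ {p : ℝ × ℝ | p.2 ≤ p.1}
          · rw [indicator_of_mem hd]; exact h0
          · rw [indicator_of_notMem hd]
        rw [hΦ0, norm_zero]
  -- the two iterated integrals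
  have hswap := integral_integral_swap (μ := μ) (ν := μ)
    (f := fun x t => Φ (x, t)) (by exact hint)
  have hL : ∀ x : ℝ, (∫ t, Φ (x, t) ∂μ) = f x * ∫ t in Ioc (0:ℝ) x, g t := by
    intro x
    have : (fun t => Φ (x, t)) = fun t => f x * (Iic x).indicator g t := by
      funext t
      by_cases ht : t ≤ x
      · rw [hΦ, indicator_of_mem (by exact ht), indicator_of_mem (by exact ht)]
      · rw [hΦ, indicator_of_notMem (by exact ht), indicator_of_notMem (by exact ht),
          mul_zero]
    rw [this, integral_const_mul]
    congr 1
    rw [integral_indicator measurableSet_Iic, hμ, Measure.restrict_restrict measurableSet_Iic]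
    congr 1
    rw [Set.Iic_inter_Ioi]
  have hR : ∀ t ∈ Ioi (0:ℝ), (∫ x, Φ (x, t) ∂μ)
      = g t * ((∫ s in Ioi (0:ℝ), f s) - ∫ s in Ioc (0:ℝ) t, f s) := by
    intro t ht
    have hfun : (fun x => Φ (x, t)) = fun x => g t * (Ici t).indicator f x := by
      funext x
      by_cases hx : t ≤ x
      · rw [hΦ, indicator_of_mem (by exact hx), indicator_of_mem (by exact hx)]
        ring
      · rw [hΦ, indicator_of_notMem (by exact hx), indicator_of_notMem (by exact hx),
          mul_zero]
    rw [hfun, integral_const_mul]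
    congr 1
    rw [integral_indicator measurableSet_Ici, hμ, Measure.restrict_restrict measurableSet_Ici]
    have hIci : Ici t ∩ Ioi (0:ℝ) = Ici t :=
      inter_eq_self_of_subset_left (fun x hx => mem_Ioi.2 (lt_of_lt_of_le (mem_Ioi.1 ht) (mem_Ici.1 hx)))
    rw [hIci, integral_Ici_eq_integral_Ioi]
    have hsplit : ∫ s in Ioi (0:ℝ), f s = (∫ s in Ioc (0:ℝ) t, f s) + ∫ s in Ioi t, f s := by
      rw [← setIntegral_union (Set.Ioc_disjoint_Ioi le_rfl) measurableSet_Ioi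
        hif.integrableOn hif.integrableOn, Set.Ioc_union_Ioi_eq_Ioi (le_of_lt ht)]
    rw [hsplit]; ring
  calc ∫ x in Ioi (0:ℝ), f x * (∫ t in Ioc (0:ℝ) x, g t)
      = ∫ x, (∫ t, Φ (x, t) ∂μ) ∂μ := integral_congr_ae (ae_of_all _ (fun x => (hL x).symm))
  _ = ∫ t, (∫ x, Φ (x, t) ∂μ) ∂μ := integral_integral_swap (by exact hint)
  _ = ∫ t in Ioi (0:ℝ), g t * ((∫ s in Ioi (0:ℝ), f s) - ∫ s in Ioc (0:ℝ) t, f s) := by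
      rw [hμ]
      exact setIntegral_congr_fun measurableSet_Ioi (fun t ht => hR t ht)


noncomputable def Fint (φ : ℝ → ℝ) (t : ℝ) : ℝ := ∫ s in Ioc (0:ℝ) t, φ s
noncomputable def Wt (φ : ℝ → ℝ) : ℝ := ∫ s in Ioi (0:ℝ), φ s

structure Nice (φ : ℝ → ℝ) : Prop where
  meas : Measurable φ
  nonneg : ∀ x, 0 ≤ φ x
  supp : Function.support φ ⊆ Icc 0 1
  bdd : ∃ Cb : ℝ, ∀ x, φ x ≤ Cb

namespace Nice

variable {φ : ℝ → ℝ}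

lemma abs_bdd (h : Nice φ) : ∃ Cb : ℝ, ∀ x, |φ x| ≤ Cb := by
  obtain ⟨Cb, hCb⟩ := h.bdd
  exact ⟨Cb, fun x => by rw [abs_of_nonneg (h.nonneg x)]; exact hCb x⟩

lemma integrable (h : Nice φ) : Integrable φ := by
  obtain ⟨Cb, hCb⟩ := h.abs_bdd
  have h1 : φ = (Icc (0:ℝ) 1).indicator φ := by
    ext x
    by_cases hx : x ∈ Icc (0:ℝ) 1
    · simp [hx]
    · simp [hx]
      by_contra hc
      exact hx (h.supp hc)
  rw [h1, integrable_indicator_iff measurableSet_Icc]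
  apply Measure.integrableOn_of_bounded (M := Cb)
  · simp [lt_top_iff_ne_top]
  · exact h.meas.aestronglyMeasurable
  · exact ae_of_all _ (fun x => by simpa [Real.norm_eq_abs] using hCb x)

lemma integrable_id_mul (h : Nice φ) : Integrable (fun t => t * φ t) := by
  obtain ⟨Cb, hCb⟩ := h.abs_bdd
  have hm : Measurable (fun t => t * φ t) := measurable_id.mul h.meas
  have hs : Function.support (fun t => t * φ t) ⊆ Icc 0 1 := by
    intro x hx
    have : φ x ≠ 0 := by
      intro h0
      apply hx
      simp [h0]
    exact h.supp this
  have h1 : (fun t => t * φ t) = (Icc (0:ℝ) 1).indicator (fun t => t * φ t) := by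
    ext x
    by_cases hx : x ∈ Icc (0:ℝ) 1
    · simp [hx]
    · rw [indicator_of_notMem hx]
      by_contra hc
      exact hx (hs (by simpa using Ne.symm hc))
  rw [h1, integrable_indicator_iff measurableSet_Icc]
  apply Measure.integrableOn_of_bounded (M := Cb)
  · simp [lt_top_iff_ne_top]
  · exact hm.aestronglyMeasurable
  · refine (ae_restrict_iff' measurableSet_Icc).2 (ae_of_all _ (fun x hx => ?_))
    rw [Real.norm_eq_abs, abs_mul]
    calc |x| * |φ x| ≤ 1 * Cb := by
          apply mul_le_mul _ (hCb x) (abs_nonneg _) zero_le_one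
          rw [abs_le]; exact ⟨by linarith [hx.1], hx.2⟩
    _ = Cb := one_mul _

lemma Fint_eq_interval (h : Nice φ) (t : ℝ) : Fint φ t = ∫ s in (0:ℝ)..t, φ s := by
  rcases le_or_gt 0 t with ht | ht
  · rw [intervalIntegral.integral_of_le ht, Fint]
  · rw [Fint, intervalIntegral.integral_of_ge (le_of_lt ht)]
    have h2 : Ioc (0:ℝ) t = ∅ := Ioc_eq_empty (by linarith)
    rw [h2]
    have h3 : ∫ s in Ioc t (0:ℝ), φ s = 0 := by
      have : ∀ᵐ s ∂(volume.restrict (Ioc t 0)), φ s = 0 := by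
        refine (ae_restrict_iff' measurableSet_Ioc).2 ?_
        have hsub : {s : ℝ | ¬(s ∈ Ioc t 0 → φ s = 0)} ⊆ {0} := by
          intro s hs
          simp only [mem_setOf_eq, Classical.not_imp] at hs
          obtain ⟨hs1, hs2⟩ := hs
          have : s ∈ Icc (0:ℝ) 1 := h.supp hs2
          simp only [mem_singleton_iff]
          exact le_antisymm hs1.2 this.1
        exact measure_mono_null hsub (measure_singleton 0)
      rw [integral_congr_ae this]
      simp
    simp [h3]

lemma continuous_Fint (h : Nice φ) : Continuous (Fint φ) := by
  have : Fint φ = fun t => ∫ s in (0:ℝ)..t, φ s := funext (fun t => h.Fint_eq_interval t)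
  rw [this]
  exact intervalIntegral.continuous_primitive (fun a b => h.integrable.intervalIntegrable) 0

lemma Fint_nonneg (h : Nice φ) (t : ℝ) : 0 ≤ Fint φ t :=
  setIntegral_nonneg measurableSet_Ioc (fun x _ => h.nonneg x)

lemma Fint_mono (h : Nice φ) {a b : ℝ} (hab : a ≤ b) : Fint φ a ≤ Fint φ b := by
  apply setIntegral_mono_set h.integrable.integrableOn
    (ae_of_all _ h.nonneg)
  exact HasSubset.Subset.eventuallyLE (Ioc_subset_Ioc_right hab)

lemma Fint_le_W (h : Nice φ) (t : ℝ) : Fint φ t ≤ Wt φ := by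
  apply setIntegral_mono_set h.integrable.integrableOn (ae_of_all _ h.nonneg)
  exact HasSubset.Subset.eventuallyLE Ioc_subset_Ioi_self

lemma Fint_split (h : Nice φ) {a b : ℝ} (ha : 0 ≤ a) (hab : a ≤ b) :
    Fint φ b = Fint φ a + ∫ s in Ioc a b, φ s := by
  rw [Fint, Fint, ← setIntegral_union (Set.Ioc_disjoint_Ioc.2 (by simp [le_refl] : min a b ≤ max 0 a)) measurableSet_Ioc
    h.integrable.integrableOn h.integrable.integrableOn, Set.Ioc_union_Ioc_eq_Ioc ha hab]

lemma W_eq_Fint_one (h : Nice φ) : Wt φ = Fint φ 1 := by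
  rw [Wt, Fint, ← Set.Ioc_union_Ioi_eq_Ioi (zero_le_one), setIntegral_union
    (Set.Ioc_disjoint_Ioi le_rfl) measurableSet_Ioi h.integrable.integrableOn
    h.integrable.integrableOn]
  have : ∫ s in Ioi (1:ℝ), φ s = 0 := by
    rw [setIntegral_congr_fun measurableSet_Ioi (g := fun _ => (0:ℝ))
      (fun s hs => by
        by_contra hc
        exact absurd ((h.supp (by simpa using hc)).2) (not_le.2 hs))]
    simp
  rw [this, add_zero]

lemma Fint_eq_W_of_ge (h : Nice φ) {t : ℝ} (ht : 1 ≤ t) : Fint φ t = Wt φ := by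
  refine le_antisymm (h.Fint_le_W t) ?_
  rw [h.W_eq_Fint_one]
  exact h.Fint_mono ht

lemma W_pos (h : Nice φ) (hne : ¬ φ =ᵐ[volume] (0 : ℝ → ℝ)) : 0 < Wt φ := by
  rcases lt_or_eq_of_le (setIntegral_nonneg measurableSet_Ioi (fun x _ => h.nonneg x)) with hw | hw
  · exact hw
  exfalso
  apply hne
  have h0 : ∀ᵐ x ∂(volume.restrict (Ioi (0:ℝ))), φ x = 0 := by
    have := (integral_eq_zero_iff_of_nonneg_ae
      (ae_of_all _ (fun x => h.nonneg x)) h.integrable.integrableOn).1 hw.symm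
    filter_upwards [this] with x hx using hx
  rw [ae_restrict_iff' measurableSet_Ioi] at h0
  have hz : ∀ᵐ x : ℝ ∂volume, x ≠ 0 := by
    refine ae_iff.2 ?_
    have hset : {x : ℝ | ¬ x ≠ 0} = {0} := by ext x; simp
    rw [hset]; exact measure_singleton 0
  filter_upwards [h0, hz] with x hx hx0
  rcases lt_trichotomy x 0 with hlt | heq | hgt
  · by_contra hc
    have := h.supp hc
    simp only [mem_Icc] at this
    linarith [this.1]
  · exact absurd heq hx0
  · exact hx hgt



lemma abs_Fint_le (h : Nice φ) (t : ℝ) : |Fint φ t| ≤ Wt φ := by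
  rw [abs_of_nonneg (h.Fint_nonneg t)]; exact h.Fint_le_W t

lemma abs_W_sub_two_Fint_le (h : Nice φ) (t : ℝ) : |Wt φ - 2 * Fint φ t| ≤ Wt φ := by
  have h1 := h.Fint_nonneg t
  have h2 := h.Fint_le_W t
  rw [abs_le]; constructor <;> linarith

lemma integrable_mul_of_bdd (h : Nice φ) {ψ : ℝ → ℝ} (hψ : Measurable ψ) {M : ℝ}
    (hM : ∀ x, |ψ x| ≤ M) : Integrable (fun x => φ x * ψ x) := by
  obtain ⟨Cb, hCb⟩ := h.abs_bdd
  have hCb0 : 0 ≤ Cb := (abs_nonneg _).trans (hCb 0)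
  apply integrable_of_supp_bdd (M := Cb * M) (h.meas.mul hψ)
  · intro x hx
    have : φ x ≠ 0 := by
      intro h0; apply hx; simp [h0]
    exact h.supp this
  · intro x _
    rw [Pi.mul_apply, abs_mul]
    exact mul_le_mul (hCb x) (hM x) (abs_nonneg _) hCb0

lemma integral_Ioi_eq (h : Nice φ) {t : ℝ} (ht : 0 < t) :
    ∫ s in Ioi t, φ s = Wt φ - Fint φ t := by
  have hsplit : Wt φ = Fint φ t + ∫ s in Ioi t, φ s := by
    rw [Wt, Fint, ← setIntegral_union (Set.Ioc_disjoint_Ioi le_rfl) measurableSet_Ioi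
      h.integrable.integrableOn h.integrable.integrableOn,
      Set.Ioc_union_Ioi_eq_Ioi (le_of_lt ht)]
  linarith

end Nice

lemma wp_eq {f g : ℝ → ℝ} (hf : Nice f) (hg : Nice g) :
    wp f g = ∫ t in Ioi (0:ℝ), g t * (Wt f - 2 * Fint f t) := by
  obtain ⟨Cf, hCf⟩ := hf.abs_bdd
  obtain ⟨Cg, hCg⟩ := hg.abs_bdd
  have step1 : wp f g = ∫ x in Ioi (0:ℝ), f x * (2 * Fint g x - Wt g) := by
    rw [wp]
    refine setIntegral_congr_fun measurableSet_Ioi (fun x hx => ?_)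
    rw [hg.integral_Ioi_eq hx]
    rw [show (∫ t in Ioc (0:ℝ) x, g t) = Fint g x from rfl]
    ring
  have hintfg : Integrable (fun x => f x * Fint g x) :=
    hf.integrable_mul_of_bdd hg.continuous_Fint.measurable (hg.abs_Fint_le)
  have step2 : wp f g = 2 * (∫ x in Ioi (0:ℝ), f x * Fint g x) - Wt g * Wt f := by
    rw [step1]
    have : ∀ x : ℝ, f x * (2 * Fint g x - Wt g)
        = 2 * (f x * Fint g x) - Wt g * f x := fun x => by ring
    simp_rw [this]
    rw [integral_sub ((hintfg.restrict).const_mul 2)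
      ((hf.integrable.restrict).const_mul (Wt g)),
      integral_const_mul, integral_const_mul]
    rfl
  have hsw : (∫ x in Ioi (0:ℝ), f x * Fint g x)
      = ∫ t in Ioi (0:ℝ), g t * (Wt f - Fint f t) :=
    swap_lemma hf.meas hg.meas hf.supp hg.supp hCf hCg hf.integrable
  rw [step2, hsw]
  have hint1 : Integrable (fun t => g t * (Wt f - Fint f t)) := by
    apply hg.integrable_mul_of_bdd (measurable_const.sub hf.continuous_Fint.measurable)
      (M := Wt f)
    intro x
    have h1 := hf.Fint_nonneg x
    have h2 := hf.Fint_le_W x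
    simp only [Pi.sub_apply]; rw [abs_le]; constructor <;> linarith
  have hexp : ∫ t in Ioi (0:ℝ), g t * (Wt f - 2 * Fint f t)
      = 2 * (∫ t in Ioi (0:ℝ), g t * (Wt f - Fint f t)) - Wt f * Wt g := by
    rw [show (fun t => g t * (Wt f - 2 * Fint f t))
        = fun t => 2 * (g t * (Wt f - Fint f t)) - Wt f * g t from funext (fun t => by ring)]
    rw [integral_sub (hint1.restrict.const_mul 2)
      (hg.integrable.restrict.const_mul (Wt f)), integral_const_mul, integral_const_mul]
    rw [show (∫ t in Ioi (0:ℝ), g t : ℝ) = Wt g from rfl]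
  rw [hexp]
  ring

lemma self_integral_zero {f : ℝ → ℝ} (hf : Nice f) :
    ∫ t in Ioi (0:ℝ), f t * (Wt f - 2 * Fint f t) = 0 := by
  obtain ⟨Cf, hCf⟩ := hf.abs_bdd
  have hint1 : Integrable (fun x => f x * Fint f x) :=
    hf.integrable_mul_of_bdd hf.continuous_Fint.measurable (hf.abs_Fint_le)
  have hsw : ∫ x in Ioi (0:ℝ), f x * Fint f x
      = ∫ t in Ioi (0:ℝ), f t * (Wt f - Fint f t) :=
    swap_lemma hf.meas hf.meas hf.supp hf.supp hCf hCf hf.integrable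
  have h2 : ∫ t in Ioi (0:ℝ), f t * (Wt f - Fint f t)
      = Wt f * Wt f - ∫ x in Ioi (0:ℝ), f x * Fint f x := by
    rw [show (fun t => f t * (Wt f - Fint f t))
        = fun t => Wt f * f t - f t * Fint f t from funext (fun t => by ring)]
    rw [integral_sub ((hf.integrable.restrict).const_mul (Wt f))
      (hint1.restrict), integral_const_mul]
    rfl
  have key : ∫ x in Ioi (0:ℝ), f x * Fint f x = Wt f * Wt f / 2 := by
    have h3 := hsw.trans h2
    linarith
  rw [show (fun t => f t * (Wt f - 2 * Fint f t))
      = fun t => Wt f * f t - 2 * (f t * Fint f t) from funext (fun t => by ring)]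
  rw [integral_sub ((hf.integrable.restrict).const_mul (Wt f))
    ((hint1.restrict).const_mul 2), integral_const_mul, integral_const_mul, key]
  rw [show (∫ t in Ioi (0:ℝ), f t : ℝ) = Wt f from rfl]
  ring


section Test
lemma tendsto_int_avg {h : ℝ → ℝ} (hc : Continuous h) (x : ℝ) :
    Tendsto (fun ε : ℝ => (∫ t in Ioc x (x+ε), h t) / ε) (𝓝[>] 0) (𝓝 (h x)) := by
  set H : ℝ → ℝ := fun u => ∫ t in x..u, h t with hH
  have hd : HasDerivAt H (h x) x :=
    intervalIntegral.integral_hasDerivAt_right (hc.intervalIntegrable _ _)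
      (hc.stronglyMeasurableAtFilter _ _) hc.continuousAt
  have hs := hasDerivAt_iff_tendsto_slope.1 hd
  have hmap : Tendsto (fun ε : ℝ => x + ε) (𝓝[>] 0) (𝓝[≠] x) := by
    apply tendsto_nhdsWithin_of_tendsto_nhds_of_eventually_within
    · have : Tendsto (fun ε : ℝ => x + ε) (𝓝 0) (𝓝 (x + 0)) :=
        (continuous_const.add continuous_id).tendsto 0
      rw [add_zero] at this
      exact this.mono_left nhdsWithin_le_nhds
    · filter_upwards [self_mem_nhdsWithin] with ε (hε : 0 < ε)
      simp only [mem_compl_iff, mem_singleton_iff]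
      intro hcon
      nlinarith [hcon]
  apply (hs.comp hmap).congr'
  filter_upwards [self_mem_nhdsWithin] with ε (hε : 0 < ε)
  show slope H x (x + ε) = _
  rw [slope_def_field, hH]
  simp only [intervalIntegral.integral_same]
  rw [intervalIntegral.integral_of_le (by linarith : x ≤ x + ε)]
  rw [show x + ε - x = ε by ring]
  rw [sub_zero]

/-- limit helper : if `0 ≤ A + q*B` for all `q ∈ (0,c)` then `0 ≤ A + c*B`. -/
lemma nonneg_limit {A B c : ℝ} (hc : 0 < c) (h : ∀ q, 0 < q → q < c → 0 ≤ A + q * B) :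
    0 ≤ A + c * B := by
  rcases le_or_gt 0 B with hB | hB
  · have := h (c/2) (by linarith) (by linarith)
    nlinarith
  · by_contra hcon
    push_neg at hcon
    set t := A + c * B with ht
    have htneg : t < 0 := hcon
    set s := min (c/2) ((-t)/(2*(-B))) with hs
    have hB' : 0 < -B := by linarith
    have ht' : 0 < -t := by linarith
    have hs0 : 0 < s := lt_min (by linarith) (div_pos ht' (by linarith))
    have hsc : s < c := lt_of_le_of_lt (min_le_left _ _) (by linarith)
    have h2 := h (c - s) (by linarith) (by linarith)
    have h3 : s * (-B) ≤ (-t)/2 := by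
      have hle : s ≤ (-t)/(2*(-B)) := min_le_right _ _
      calc s * (-B) ≤ ((-t)/(2*(-B))) * (-B) := by nlinarith
      _ = (-t)/2 := by
          rw [div_mul_eq_mul_div, mul_comm (2:ℝ) (-B), ← div_div, mul_div_assoc]
          rw [div_self (by linarith : (-B) ≠ 0), mul_one]
    have : A + (c - s) * B = t + s * (-B) := by ring
    nlinarith

end Test


lemma key_two_point {C : ℝ} (hC0 : 0 < C) {f : ℝ → ℝ} (hf : Nice f)
    (Hyp : ∀ g : ℝ → ℝ, IsStrategy g → Function.support g ⊆ Icc (0:ℝ) 1 → mca g ≤ C →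
      0 ≤ wp f g)
    {x y p q : ℝ} (hx : 0 ≤ x) (hx1 : x < 1) (hy : 0 ≤ y) (hy1 : y < 1)
    (hp : 0 ≤ p) (hq : 0 < q) (hcon : p * x + q * y < C * (p + q)) :
    0 ≤ p * (Wt f - 2 * Fint f x) + q * (Wt f - 2 * Fint f y) := by
  set h : ℝ → ℝ := fun t => Wt f - 2 * Fint f t with hh
  have hcont : Continuous h := continuous_const.sub (continuous_const.mul hf.continuous_Fint)
  have hpq : 0 < p + q := by linarith
  set εb : ℝ := min (min (1 - x) (1 - y)) ((C * (p + q) - (p * x + q * y)) / (p + q)) with hεb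
  have hεb0 : 0 < εb := by
    apply lt_min (lt_min (by linarith) (by linarith))
    apply div_pos (by linarith) hpq
  have hind : ∀ (s : Set ℝ) (t : ℝ), (0:ℝ) ≤ s.indicator (fun _ => (1:ℝ)) t ∧
      s.indicator (fun _ => (1:ℝ)) t ≤ 1 := by
    intro s t
    by_cases hmem : t ∈ s
    · simp [hmem]
    · simp [hmem]
  have main : ∀ ε, 0 < ε → ε ≤ εb →
      0 ≤ p * ((∫ t in Ioc x (x+ε), h t) / ε) + q * ((∫ t in Ioc y (y+ε), h t) / ε) := by
    intro ε hε hεle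
    have hxe : x + ε ≤ 1 := by
      have := le_trans hεle (le_trans (min_le_left _ _) (min_le_left _ _)); linarith
    have hye : y + ε ≤ 1 := by
      have := le_trans hεle (le_trans (min_le_left _ _) (min_le_right _ _)); linarith
    have hεc : ε ≤ (C * (p + q) - (p * x + q * y)) / (p + q) :=
      le_trans hεle (min_le_right _ _)
    have hεc' : ε * (p + q) ≤ C * (p + q) - (p * x + q * y) := (le_div_iff₀ hpq).1 hεc
    set i1 : ℝ → ℝ := (Ioc x (x+ε)).indicator (fun _ => (1:ℝ)) with hi1def
    set i2 : ℝ → ℝ := (Ioc y (y+ε)).indicator (fun _ => (1:ℝ)) with hi2def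
    set g : ℝ → ℝ := fun t => p * i1 t + q * i2 t with hg
    have hgm : Measurable g :=
      ((measurable_const.indicator measurableSet_Ioc).const_mul p).add
        ((measurable_const.indicator measurableSet_Ioc).const_mul q)
    have hgnn : ∀ t, 0 ≤ g t := fun t =>
      add_nonneg (mul_nonneg hp (hind _ t).1) (mul_nonneg hq.le (hind _ t).1)
    have hgsupp : Function.support g ⊆ Icc 0 1 := by
      intro t ht
      rw [Function.mem_support] at ht
      by_contra htn
      have h1 : t ∉ Ioc x (x+ε) := fun hmem =>
        htn ⟨le_trans hx (le_of_lt hmem.1), le_trans hmem.2 hxe⟩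
      have h2 : t ∉ Ioc y (y+ε) := fun hmem =>
        htn ⟨le_trans hy (le_of_lt hmem.1), le_trans hmem.2 hye⟩
      apply ht
      show p * i1 t + q * i2 t = 0
      rw [hi1def, hi2def, indicator_of_notMem h1, indicator_of_notMem h2]
      ring
    have hgbd : ∀ t, g t ≤ p + q := fun t => by
      have b1 : p * i1 t ≤ p * 1 := mul_le_mul_of_nonneg_left (hind _ t).2 hp
      have b2 : q * i2 t ≤ q * 1 := mul_le_mul_of_nonneg_left (hind _ t).2 hq.le
      rw [hg]; dsimp only; linarith
    have hgNice : Nice g := ⟨hgm, hgnn, hgsupp, ⟨p + q, hgbd⟩⟩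
    have hgstrat : IsStrategy g := by
      refine ⟨hgm, ⟨p + q, hgbd⟩, hgnn, ⟨1, hgsupp⟩, ?_⟩
      intro hae
      have hsub : Ioc y (y+ε) ⊆ {t | ¬ g t = 0} := by
        intro t ht
        have e2 : i2 t = 1 := by
          rw [hi2def]; exact indicator_of_mem ht _
        have e1 : 0 ≤ i1 t := by
          rw [hi1def]; exact (hind _ t).1
        have hgt : 0 < g t := by
          show 0 < p * i1 t + q * i2 t
          rw [e2]
          nlinarith [e1]
        simp only [mem_setOf_eq]
        intro hzero
        rw [hzero] at hgt
        exact lt_irrefl 0 hgt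
      have h0 : volume (Ioc y (y+ε)) = 0 :=
        measure_mono_null hsub (ae_iff.1 hae)
      rw [Real.volume_Ioc] at h0
      simp only [ENNReal.ofReal_eq_zero] at h0
      linarith
    -- bump integrals
    have hIoc_sub : ∀ z : ℝ, 0 ≤ z → Ioc z (z+ε) ∩ Ioi (0:ℝ) = Ioc z (z+ε) := fun z hz =>
      inter_eq_self_of_subset_left (fun t ht => lt_of_le_of_lt hz ht.1)
    have bump_W : ∀ z : ℝ, 0 ≤ z →
        (∫ t in Ioi (0:ℝ), (Ioc z (z+ε)).indicator (fun _ => (1:ℝ)) t) = ε := by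
      intro z hz
      rw [integral_indicator measurableSet_Ioc,
        Measure.restrict_restrict measurableSet_Ioc, hIoc_sub z hz, setIntegral_const,
        Real.volume_real_Ioc_of_le (by linarith), smul_eq_mul, mul_one]
      ring
    have bump_mean : ∀ z : ℝ, 0 ≤ z →
        (∫ t in Ioi (0:ℝ), t * (Ioc z (z+ε)).indicator (fun _ => (1:ℝ)) t)
          = ε * z + ε^2/2 := by
      intro z hz
      have heq : (fun t => t * (Ioc z (z+ε)).indicator (fun _ => (1:ℝ)) t)
          = (Ioc z (z+ε)).indicator (fun t => t) := by
        funext t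
        by_cases ht : t ∈ Ioc z (z+ε) <;> simp [ht]
      rw [heq, integral_indicator measurableSet_Ioc,
        Measure.restrict_restrict measurableSet_Ioc, hIoc_sub z hz,
        ← intervalIntegral.integral_of_le (by linarith : z ≤ z + ε),
        integral_id]
      ring
    have bump_h : ∀ z : ℝ, 0 ≤ z →
        (∫ t in Ioi (0:ℝ), (Ioc z (z+ε)).indicator (fun _ => (1:ℝ)) t * h t)
          = ∫ t in Ioc z (z+ε), h t := by
      intro z hz
      have heq : (fun t => (Ioc z (z+ε)).indicator (fun _ => (1:ℝ)) t * h t)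
          = (Ioc z (z+ε)).indicator h := by
        funext t
        by_cases ht : t ∈ Ioc z (z+ε) <;> simp [ht]
      rw [heq, integral_indicator measurableSet_Ioc,
        Measure.restrict_restrict measurableSet_Ioc, hIoc_sub z hz]
    -- integrability of pieces
    have hi1int : Integrable i1 := by
      rw [hi1def, integrable_indicator_iff measurableSet_Ioc]
      exact integrableOn_const (by rw [Real.volume_Ioc]; exact ENNReal.ofReal_ne_top)
    have hi2int : Integrable i2 := by
      rw [hi2def, integrable_indicator_iff measurableSet_Ioc]
      exact integrableOn_const (by rw [Real.volume_Ioc]; exact ENNReal.ofReal_ne_top)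
    have hti1int : Integrable (fun t => t * i1 t) := by
      have heq : (fun t => t * i1 t) = (Ioc x (x+ε)).indicator (fun t => t) := by
        funext t
        rw [hi1def]
        by_cases ht : t ∈ Ioc x (x+ε) <;> simp [ht]
      rw [heq, integrable_indicator_iff measurableSet_Ioc]
      exact (continuous_id.integrableOn_Ioc)
    have hti2int : Integrable (fun t => t * i2 t) := by
      have heq : (fun t => t * i2 t) = (Ioc y (y+ε)).indicator (fun t => t) := by
        funext t
        rw [hi2def]
        by_cases ht : t ∈ Ioc y (y+ε) <;> simp [ht]
      rw [heq, integrable_indicator_iff measurableSet_Ioc]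
      exact (continuous_id.integrableOn_Ioc)
    have hi1hint : Integrable (fun t => i1 t * h t) := by
      have heq : (fun t => i1 t * h t) = (Ioc x (x+ε)).indicator h := by
        funext t
        rw [hi1def]
        by_cases ht : t ∈ Ioc x (x+ε) <;> simp [ht]
      rw [heq, integrable_indicator_iff measurableSet_Ioc]
      exact hcont.integrableOn_Ioc
    have hi2hint : Integrable (fun t => i2 t * h t) := by
      have heq : (fun t => i2 t * h t) = (Ioc y (y+ε)).indicator h := by
        funext t
        rw [hi2def]
        by_cases ht : t ∈ Ioc y (y+ε) <;> simp [ht]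
      rw [heq, integrable_indicator_iff measurableSet_Ioc]
      exact hcont.integrableOn_Ioc
    -- mca g ≤ C
    have hWg : (∫ t in Ioi (0:ℝ), g t) = (p + q) * ε := by
      rw [show (fun t => g t) = fun t => p * i1 t + q * i2 t from rfl]
      rw [integral_add ((hi1int.restrict).const_mul p) ((hi2int.restrict).const_mul q),
        integral_const_mul, integral_const_mul, bump_W x hx, bump_W y hy]
      ring
    have hmean : (∫ t in Ioi (0:ℝ), t * g t)
        = p * (ε * x + ε^2/2) + q * (ε * y + ε^2/2) := by
      rw [show (fun t => t * g t) = fun t => p * (t * i1 t) + q * (t * i2 t) from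
        funext (fun t => by rw [hg]; ring)]
      rw [integral_add ((hti1int.restrict).const_mul p) ((hti2int.restrict).const_mul q),
        integral_const_mul, integral_const_mul, bump_mean x hx, bump_mean y hy]
    have hmcag : mca g ≤ C := by
      rw [mca, hWg, hmean, div_le_iff₀ (by positivity)]
      nlinarith [hεc', hε, hpq]
    have h0 := Hyp g hgstrat hgsupp hmcag
    rw [wp_eq hf hgNice] at h0
    have hsplit : ∫ t in Ioi (0:ℝ), g t * (Wt f - 2 * Fint f t)
        = p * (∫ t in Ioc x (x+ε), h t) + q * (∫ t in Ioc y (y+ε), h t) := by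
      rw [show (fun t => g t * (Wt f - 2 * Fint f t))
          = fun t => p * (i1 t * h t) + q * (i2 t * h t) from
        funext (fun t => by rw [hg, hh]; dsimp only; ring)]
      rw [integral_add ((hi1hint.restrict).const_mul p) ((hi2hint.restrict).const_mul q),
        integral_const_mul, integral_const_mul, bump_h x hx, bump_h y hy]
    rw [hsplit] at h0
    have := div_nonneg h0 hε.le
    rw [show (p * (∫ t in Ioc x (x+ε), h t) + q * (∫ t in Ioc y (y+ε), h t)) / ε
        = p * ((∫ t in Ioc x (x+ε), h t) / ε) + q * ((∫ t in Ioc y (y+ε), h t) / ε)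
      from by ring] at this
    exact this
  have hlim : Tendsto (fun ε : ℝ => p * ((∫ t in Ioc x (x+ε), h t) / ε)
      + q * ((∫ t in Ioc y (y+ε), h t) / ε)) (𝓝[>] 0) (𝓝 (p * h x + q * h y)) :=
    ((tendsto_int_avg hcont x).const_mul p).add ((tendsto_int_avg hcont y).const_mul q)
  refine ge_of_tendsto hlim ?_
  filter_upwards [Ioc_mem_nhdsGT_of_mem (⟨le_refl (0:ℝ), hεb0⟩ : (0:ℝ) ∈ Ico 0 εb)]
    with ε hεmem
  exact main ε hεmem.1 hεmem.2

lemma backward_dir {C a : ℝ} (hC : C ∈ Ioo (0:ℝ) (1/2)) {f : ℝ → ℝ} (hf : Nice f)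
    (ha : 0 < a)
    (h1 : ∀ᵐ x ∂(volume.restrict (Icc (0:ℝ) (2*C))), f x = a)
    (h2 : ∀ᵐ x ∂(volume.restrict (Ioc (2*C) 1)), f x = 0) :
    ∀ g : ℝ → ℝ, IsStrategy g → Function.support g ⊆ Icc (0:ℝ) 1 → mca g ≤ C →
      0 ≤ wp f g := by
  obtain ⟨hC0, hC2⟩ := hC
  have h2C1 : 2 * C < 1 := by linarith
  have hFlow : ∀ t ∈ Icc (0:ℝ) (2*C), Fint f t = a * t := by
    intro t ht
    have hsub : Ioc (0:ℝ) t ⊆ Icc (0:ℝ) (2*C) := fun s hs => ⟨hs.1.le, le_trans hs.2 ht.2⟩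
    have hae : ∀ᵐ x ∂(volume.restrict (Ioc (0:ℝ) t)), f x = a :=
      ae_restrict_of_ae_restrict_of_subset hsub h1
    rw [Fint, setIntegral_congr_ae measurableSet_Ioc
      ((ae_restrict_iff' measurableSet_Ioc).1 hae)]
    rw [setIntegral_const, Real.volume_real_Ioc_of_le (by linarith [ht.1]), smul_eq_mul]
    ring
  have hF2C : Fint f (2*C) = 2 * a * C := by
    rw [hFlow (2*C) ⟨by linarith, le_refl _⟩]; ring
  have hFmid : ∀ t ∈ Icc (2*C) 1, Fint f t = 2 * a * C := by
    intro t ht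
    rw [hf.Fint_split (by linarith : (0:ℝ) ≤ 2*C) ht.1, hF2C]
    have hsub : Ioc (2*C) t ⊆ Ioc (2*C) 1 := Ioc_subset_Ioc_right ht.2
    have hae : ∀ᵐ x ∂(volume.restrict (Ioc (2*C) t)), f x = 0 :=
      ae_restrict_of_ae_restrict_of_subset hsub h2
    rw [setIntegral_congr_ae measurableSet_Ioc
      ((ae_restrict_iff' measurableSet_Ioc).1 hae)]
    simp
  have hW : Wt f = 2 * a * C := by
    rw [hf.W_eq_Fint_one]
    exact hFmid 1 ⟨by linarith, le_refl _⟩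
  have hFhigh : ∀ t, 2*C ≤ t → Fint f t = 2 * a * C := by
    intro t ht
    rcases le_or_gt t 1 with ht1 | ht1
    · exact hFmid t ⟨ht, ht1⟩
    · rw [hf.Fint_eq_W_of_ge ht1.le, hW]
  have hpt : ∀ t, 0 < t → 2*a*(C - t) ≤ Wt f - 2 * Fint f t := by
    intro t ht
    rcases le_or_gt t (2*C) with h' | h'
    · rw [hW, hFlow t ⟨ht.le, h'⟩]; ring_nf; nlinarith
    · rw [hW, hFhigh t h'.le]; nlinarith
  intro g hgS hsuppg hmcag
  have hgNice : Nice g := ⟨hgS.1, hgS.2.2.1, hsuppg, hgS.2.1⟩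
  have hWg : 0 < Wt g := hgNice.W_pos hgS.2.2.2.2
  have hnum : (∫ t in Ioi (0:ℝ), t * g t) ≤ C * Wt g := by
    rw [mca] at hmcag
    exact (div_le_iff₀ hWg).1 hmcag
  rw [wp_eq hf hgNice]
  have hint1 : Integrable (fun t => g t * (Wt f - 2 * Fint f t)) :=
    hgNice.integrable_mul_of_bdd
      (measurable_const.sub (continuous_const.mul hf.continuous_Fint).measurable)
      (hf.abs_W_sub_two_Fint_le)
  have hint2 : Integrable (fun t => 2*a*C * g t - 2*a*(t * g t)) :=
    (hgNice.integrable.const_mul _).sub ((hgNice.integrable_id_mul).const_mul _)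
  have hmono : (∫ t in Ioi (0:ℝ), (2*a*C * g t - 2*a*(t * g t)))
      ≤ ∫ t in Ioi (0:ℝ), g t * (Wt f - 2 * Fint f t) := by
    apply setIntegral_mono_on hint2.restrict hint1.restrict measurableSet_Ioi
    intro t ht
    have hgt := hgS.2.2.1 t
    have h3 : 2*a*C * g t - 2*a*(t * g t) = g t * (2*a*(C - t)) := by ring
    rw [h3]
    exact mul_le_mul_of_nonneg_left (hpt t ht) hgt
  have hval : (∫ t in Ioi (0:ℝ), (2*a*C * g t - 2*a*(t * g t)))
      = 2*a*C * Wt g - 2*a*(∫ t in Ioi (0:ℝ), t * g t) := by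
    rw [integral_sub (hgNice.integrable.restrict.const_mul _)
      ((hgNice.integrable_id_mul.restrict).const_mul _), integral_const_mul, integral_const_mul]
    rfl
  have : 0 ≤ 2*a*C * Wt g - 2*a*(∫ t in Ioi (0:ℝ), t * g t) := by nlinarith
  linarith [hmono, hval ▸ this]

lemma ae_ne_const (c : ℝ) : ∀ᵐ x : ℝ ∂volume, x ≠ c := by
  refine ae_iff.2 ?_
  have hset : {x : ℝ | ¬ x ≠ c} = {c} := by ext x; simp
  rw [hset]; exact measure_singleton c

lemma Fint_zero {f : ℝ → ℝ} : Fint f 0 = 0 := by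
  rw [Fint, Ioc_self, Measure.restrict_empty, integral_zero_measure]

lemma exists_lambda {C : ℝ} (hC : C ∈ Ioo (0:ℝ) (1/2)) {f : ℝ → ℝ} (hf : Nice f)
    (hne : ¬ f =ᵐ[volume] (0 : ℝ → ℝ))
    (Hyp : ∀ g : ℝ → ℝ, IsStrategy g → Function.support g ⊆ Icc (0:ℝ) 1 → mca g ≤ C →
      0 ≤ wp f g) :
    ∃ l : ℝ, 0 < l ∧ l * C ≤ Wt f ∧
      ∀ t ∈ Icc (0:ℝ) 1, l * (C - t) ≤ Wt f - 2 * Fint f t := by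
  obtain ⟨hC0, hC2⟩ := hC
  have hC1 : C < 1 := by linarith
  have hW0 : 0 < Wt f := hf.W_pos hne
  have hcont : Continuous (fun t => Wt f - 2 * Fint f t) :=
    continuous_const.sub (continuous_const.mul hf.continuous_Fint)
  -- single-point consequence
  have K1 : ∀ y, 0 < y → y < C → 0 ≤ Wt f - 2 * Fint f y := by
    intro y hy0 hyC
    have := key_two_point hC0 hf Hyp (x := 0) (y := y) (p := 0) (q := 1)
      le_rfl (by linarith) hy0.le (by linarith) le_rfl one_pos (by simpa using hyC)
    simpa using this
  -- point paired with 0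
  have K2 : ∀ y, C < y → y < 1 → 0 ≤ (y - C) * Wt f + C * (Wt f - 2 * Fint f y) := by
    intro y hCy hy1
    have hq : ∀ q, 0 < q → q < C →
        0 ≤ (y - C) * Wt f + q * (Wt f - 2 * Fint f y) := by
      intro q hq0 hqC
      have hcon : (y - C) * 0 + q * y < C * ((y - C) + q) := by nlinarith
      have := key_two_point hC0 hf Hyp (x := 0) (y := y) (p := y - C) (q := q)
        le_rfl (by linarith) (by linarith) hy1 (by linarith) hq0 hcon
      rw [Fint_zero] at this
      calc (0:ℝ) ≤ (y - C) * (Wt f - 2 * 0) + q * (Wt f - 2 * Fint f y) := this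
      _ = (y - C) * Wt f + q * (Wt f - 2 * Fint f y) := by ring
    exact nonneg_limit hC0 hq
  -- pair x ∈ (0,C), y ∈ (C,1)
  have K3 : ∀ x, 0 < x → x < C → ∀ y, C < y → y < 1 →
      0 ≤ (y - C) * (Wt f - 2 * Fint f x) + (C - x) * (Wt f - 2 * Fint f y) := by
    intro x hx0 hxC y hCy hy1
    have hq : ∀ q, 0 < q → q < C - x →
        0 ≤ (y - C) * (Wt f - 2 * Fint f x) + q * (Wt f - 2 * Fint f y) := by
      intro q hq0 hqC
      have hcon : (y - C) * x + q * y < C * ((y - C) + q) := by nlinarith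
      exact key_two_point hC0 hf Hyp (x := x) (y := y) (p := y - C) (q := q)
        hx0.le (by linarith) (by linarith) hy1 (by linarith) hq0 hcon
    exact nonneg_limit (by linarith) hq
  -- the dual multiplier
  set Λ : Set ℝ := {r | ∃ y, C < y ∧ y < 1 ∧ r = (2 * Fint f y - Wt f) / (y - C)} with hΛ
  have hub : ∀ r ∈ Λ, r ≤ Wt f / C := by
    rintro r ⟨y, hCy, hy1, rfl⟩
    rw [div_le_div_iff₀ (by linarith) hC0]
    have := K2 y hCy hy1
    nlinarith
  -- a positive element
  have hway : ∃ y, C < y ∧ y < 1 ∧ Wt f / 2 < Fint f y := by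
    have htd : Tendsto (Fint f) (𝓝[<] 1) (𝓝 (Wt f)) := by
      have h1 : Fint f 1 = Wt f := (hf.W_eq_Fint_one).symm
      have := (hf.continuous_Fint.tendsto 1).mono_left (nhdsWithin_le_nhds (s := Iio 1))
      rwa [h1] at this
    have hev : ∀ᶠ y in 𝓝[<] (1:ℝ), Wt f / 2 < Fint f y :=
      htd (Ioi_mem_nhds (by linarith))
    have hev2 : ∀ᶠ y in 𝓝[<] (1:ℝ), y ∈ Ioo C 1 :=
      Ioo_mem_nhdsLT_of_mem ⟨hC1, le_refl _⟩
    obtain ⟨y, hy1, hy2⟩ := (hev.and hev2).exists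
    exact ⟨y, hy2.1, hy2.2, hy1⟩
  obtain ⟨y₀, hy₀C, hy₀1, hy₀F⟩ := hway
  have hmem₀ : (2 * Fint f y₀ - Wt f) / (y₀ - C) ∈ Λ := ⟨y₀, hy₀C, hy₀1, rfl⟩
  have hbddA : BddAbove Λ := ⟨Wt f / C, hub⟩
  have hneΛ : Λ.Nonempty := ⟨_, hmem₀⟩
  set l : ℝ := sSup Λ with hl
  have hlpos : 0 < l := by
    have h1 : 0 < (2 * Fint f y₀ - Wt f) / (y₀ - C) :=
      div_pos (by linarith) (by linarith)
    exact lt_of_lt_of_le h1 (le_csSup hbddA hmem₀)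
  have hlub : l ≤ Wt f / C := csSup_le hneΛ hub
  have hlC : l * C ≤ Wt f := by
    rw [← le_div_iff₀ hC0] at *
    exact hlub
  refine ⟨l, hlpos, hlC, ?_⟩
  intro t ht
  rcases lt_trichotomy t C with htC | htC | htC
  · -- t < C
    rcases eq_or_lt_of_le ht.1 with ht0 | ht0
    · rw [← ht0, Fint_zero]
      calc l * (C - 0) = l * C := by ring
      _ ≤ Wt f := hlC
      _ = Wt f - 2 * 0 := by ring
    · have hub2 : l ≤ (Wt f - 2 * Fint f t) / (C - t) := by
        apply csSup_le hneΛ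
        rintro r ⟨y, hCy, hy1, rfl⟩
        rw [div_le_div_iff₀ (by linarith) (by linarith)]
        have := K3 t ht0 htC y hCy hy1
        nlinarith
      rw [← le_div_iff₀ (by linarith : (0:ℝ) < C - t)]
      exact hub2
  · -- t = C
    subst htC
    rw [sub_self, mul_zero]
    have htd : Tendsto (fun y => Wt f - 2 * Fint f y) (𝓝[<] t) (𝓝 (Wt f - 2 * Fint f t)) :=
      (hcont.tendsto t).mono_left (nhdsWithin_le_nhds (s := Iio t))
    apply ge_of_tendsto htd
    filter_upwards [Ioo_mem_nhdsLT_of_mem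
      (⟨hC0, le_refl t⟩ : t ∈ Ioc (0:ℝ) t)] with y hy
    exact K1 y hy.1 hy.2
  · -- t > C
    rcases eq_or_lt_of_le ht.2 with ht1 | ht1
    · -- t = 1 : limit
      have htd : Tendsto (fun y => (Wt f - 2 * Fint f y) - l * (C - y)) (𝓝[<] t)
          (𝓝 ((Wt f - 2 * Fint f t) - l * (C - t))) :=
        ((hcont.sub (continuous_const.mul (continuous_const.sub continuous_id))).tendsto t).mono_left
          (nhdsWithin_le_nhds (s := Iio t))
      have hge : 0 ≤ (Wt f - 2 * Fint f t) - l * (C - t) := by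
        apply ge_of_tendsto htd
        filter_upwards [Ioo_mem_nhdsLT_of_mem
          (⟨htC, le_refl t⟩ : t ∈ Ioc C t)] with y hy
        have hyC : C < y := hy.1
        have hy1 : y < 1 := lt_of_lt_of_le hy.2 ht.2
        have hmem : (2 * Fint f y - Wt f) / (y - C) ∈ Λ := ⟨y, hyC, hy1, rfl⟩
        have hle : (2 * Fint f y - Wt f) / (y - C) ≤ l := le_csSup hbddA hmem
        rw [div_le_iff₀ (by linarith)] at hle
        nlinarith
      linarith
    · -- t < 1 : direct
      have hmem : (2 * Fint f t - Wt f) / (t - C) ∈ Λ := ⟨t, htC, ht1, rfl⟩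
      have hle : (2 * Fint f t - Wt f) / (t - C) ≤ l := le_csSup hbddA hmem
      rw [div_le_iff₀ (by linarith)] at hle
      nlinarith

lemma forward_dir {C : ℝ} (hC : C ∈ Ioo (0:ℝ) (1/2)) {f : ℝ → ℝ} (hf : Nice f)
    (hne : ¬ f =ᵐ[volume] (0 : ℝ → ℝ)) (hmca : mca f ≤ C)
    (Hyp : ∀ g : ℝ → ℝ, IsStrategy g → Function.support g ⊆ Icc (0:ℝ) 1 → mca g ≤ C →
      0 ≤ wp f g) :
    ∃ a : ℝ, 0 < a ∧ (∀ᵐ x ∂(volume.restrict (Icc (0:ℝ) (2*C))), f x = a) ∧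
      (∀ᵐ x ∂(volume.restrict (Ioc (2*C) 1)), f x = 0) := by
  obtain ⟨hC0, hC2⟩ := hC
  have hW0 : 0 < Wt f := hf.W_pos hne
  obtain ⟨l, hl0, hlC, hlow⟩ := exists_lambda ⟨hC0, hC2⟩ hf hne Hyp
  have hmca' : (∫ t in Ioi (0:ℝ), t * f t) ≤ C * Wt f := (div_le_iff₀ hW0).1 hmca
  have hbr_nonneg : ∀ t, 0 < t → 0 ≤ f t * ((Wt f - 2 * Fint f t) + l * (t - C)) := by
    intro t ht
    rcases le_or_gt t 1 with ht1 | ht1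
    · apply mul_nonneg (hf.nonneg t)
      have := hlow t ⟨ht.le, ht1⟩
      linarith
    · have hf0 : f t = 0 := by
        by_contra hc
        exact absurd ((hf.supp hc).2) (not_le.2 ht1)
      rw [hf0, zero_mul]
  have hint1 : Integrable (fun t => f t * (Wt f - 2 * Fint f t)) :=
    hf.integrable_mul_of_bdd
      (measurable_const.sub (continuous_const.mul hf.continuous_Fint).measurable)
      (hf.abs_W_sub_two_Fint_le)
  have hφeq : (fun t => f t * ((Wt f - 2 * Fint f t) + l * (t - C)))
      = fun t => (f t * (Wt f - 2 * Fint f t) + l * (t * f t)) - (l * C) * f t :=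
    funext (fun t => by ring)
  have hφint : Integrable (fun t => f t * ((Wt f - 2 * Fint f t) + l * (t - C))) := by
    rw [hφeq]
    exact (hint1.add (hf.integrable_id_mul.const_mul l)).sub (hf.integrable.const_mul (l*C))
  have hφval : (∫ t in Ioi (0:ℝ), f t * ((Wt f - 2 * Fint f t) + l * (t - C)))
      = l * ((∫ t in Ioi (0:ℝ), t * f t) - C * Wt f) := by
    rw [hφeq]
    have i1 : Integrable (fun t => f t * (Wt f - 2 * Fint f t) + l * (t * f t))
        (volume.restrict (Ioi (0:ℝ))) :=
      hint1.restrict.add ((hf.integrable_id_mul.restrict).const_mul l)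
    have i2 : Integrable (fun t => (l * C) * f t) (volume.restrict (Ioi (0:ℝ))) :=
      (hf.integrable.restrict).const_mul (l*C)
    have i3 : Integrable (fun t => l * (t * f t)) (volume.restrict (Ioi (0:ℝ))) :=
      (hf.integrable_id_mul.restrict).const_mul l
    rw [integral_sub i1 i2, integral_add hint1.restrict i3,
      self_integral_zero hf, integral_const_mul, integral_const_mul]
    rw [show (∫ t in Ioi (0:ℝ), f t : ℝ) = Wt f from rfl]
    ring
  have hφle : (∫ t in Ioi (0:ℝ), f t * ((Wt f - 2 * Fint f t) + l * (t - C))) ≤ 0 := by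
    rw [hφval]; nlinarith
  have hnn : 0 ≤ᵐ[volume.restrict (Ioi (0:ℝ))]
      fun t => f t * ((Wt f - 2 * Fint f t) + l * (t - C)) :=
    (ae_restrict_iff' measurableSet_Ioi).2 (ae_of_all _ (fun t ht => hbr_nonneg t ht))
  have hφzero : ∀ᵐ t ∂(volume.restrict (Ioi (0:ℝ))),
      f t * ((Wt f - 2 * Fint f t) + l * (t - C)) = 0 := by
    have hge : 0 ≤ ∫ t in Ioi (0:ℝ), f t * ((Wt f - 2 * Fint f t) + l * (t - C)) :=
      integral_nonneg_of_ae hnn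
    have h0 : (∫ t in Ioi (0:ℝ), f t * ((Wt f - 2 * Fint f t) + l * (t - C))) = 0 :=
      le_antisymm hφle hge
    exact (integral_eq_zero_iff_of_nonneg_ae hnn hφint.restrict).1 h0
  have hmemT : ∀ᵐ t ∂volume, f t ≠ 0 →
      (t ∈ Icc (0:ℝ) 1 ∧ Fint f t = (Wt f + l * (t - C))/2) := by
    filter_upwards [(ae_restrict_iff' measurableSet_Ioi).1 hφzero, ae_ne_const (0:ℝ)]
      with t h1 h2
    intro hft
    have htI : t ∈ Icc (0:ℝ) 1 := hf.supp hft
    refine ⟨htI, ?_⟩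
    have ht0 : 0 < t := lt_of_le_of_ne htI.1 (Ne.symm h2)
    rcases mul_eq_zero.1 (h1 ht0) with hc | hc
    · exact absurd hc hft
    · linarith
  set T : Set ℝ := {t | t ∈ Icc (0:ℝ) 1 ∧ Fint f t = (Wt f + l * (t - C))/2} with hT
  have hTclosed : IsClosed T := by
    have heq : T = Icc (0:ℝ) 1 ∩ {t | Fint f t = (Wt f + l * (t - C))/2} := rfl
    rw [heq]
    exact isClosed_Icc.inter (isClosed_eq hf.continuous_Fint
      ((continuous_const.add (continuous_const.mul
        (continuous_id.sub continuous_const))).div_const 2))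
  have hTs : T ⊆ Icc (0:ℝ) 1 := fun t ht => ht.1
  have hTne : T.Nonempty := by
    by_contra hc
    rw [not_nonempty_iff_eq_empty] at hc
    apply hne
    filter_upwards [hmemT] with t ht
    show f t = 0
    by_contra hft
    have h3 : t ∈ T := ht hft
    rw [hc] at h3
    exact notMem_empty t h3
  have hbddB : BddBelow T := ⟨0, fun t ht => (hTs ht).1⟩
  have hbddA : BddAbove T := ⟨1, fun t ht => (hTs ht).2⟩
  have hαT : sInf T ∈ T := hTclosed.csInf_mem hTne hbddB
  have hβT : sSup T ∈ T := hTclosed.csSup_mem hTne hbddA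
  have hF_α : Fint f (sInf T) = 0 := by
    have hzero : ∀ᵐ s ∂(volume.restrict (Ioc (0:ℝ) (sInf T))), f s = 0 := by
      filter_upwards [ae_restrict_mem measurableSet_Ioc, ae_restrict_of_ae hmemT,
        ae_restrict_of_ae (ae_ne_const (sInf T))] with s hs hmem hsne
      by_contra hfs
      have hsT : s ∈ T := hmem hfs
      have h4 : sInf T ≤ s := csInf_le hbddB hsT
      have h5 : s < sInf T := lt_of_le_of_ne hs.2 hsne
      linarith
    rw [Fint, integral_eq_zero_of_ae hzero]
  have hAα : (Wt f + l * (sInf T - C))/2 = 0 := by rw [← hαT.2]; exact hF_α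
  have hF_β : Fint f (sSup T) = Wt f := by
    have hzero : ∀ᵐ s ∂(volume.restrict (Ioc (sSup T) 1)), f s = 0 := by
      filter_upwards [ae_restrict_mem measurableSet_Ioc, ae_restrict_of_ae hmemT]
        with s hs hmem
      by_contra hfs
      have hsT : s ∈ T := hmem hfs
      have h4 : s ≤ sSup T := le_csSup hbddA hsT
      linarith [hs.1]
    rw [hf.W_eq_Fint_one, hf.Fint_split (hTs hβT).1 (hTs hβT).2,
      integral_eq_zero_of_ae hzero, add_zero]
  have hAβ : (Wt f + l * (sSup T - C))/2 = Wt f := by rw [← hβT.2]; exact hF_β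
  have hα0 : sInf T = 0 := by
    have h1 : Wt f = l * (C - sInf T) := by nlinarith [hAα]
    have h2 : l * C ≤ l * (C - sInf T) := by rw [← h1]; exact hlC
    have h3 : C ≤ C - sInf T := le_of_mul_le_mul_left h2 hl0
    have h4 : 0 ≤ sInf T := (hTs hαT).1
    linarith
  have hWl : Wt f = l * C := by
    have h1 : Wt f = l * (C - sInf T) := by nlinarith [hAα]
    rw [hα0] at h1
    rw [h1]; ring
  have hβ2C : sSup T = 2 * C := by
    have h1 : l * (sSup T - C) = Wt f := by nlinarith [hAβ]
    rw [hWl] at h1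
    have h2 : sSup T - C = C := mul_left_cancel₀ (ne_of_gt hl0) h1
    linarith
  have hTmem : ∀ t ∈ Icc (0:ℝ) (2*C), Fint f t = (Wt f + l * (t - C))/2 := by
    intro t ht
    by_contra hFt
    have hT1ne : (T ∩ Icc 0 t).Nonempty :=
      ⟨sInf T, hαT, ⟨by rw [hα0], by rw [hα0]; exact ht.1⟩⟩
    have hT1c : IsClosed (T ∩ Icc 0 t) := hTclosed.inter isClosed_Icc
    have hT1bdd : BddAbove (T ∩ Icc 0 t) := ⟨t, fun s hs => hs.2.2⟩
    have haT : sSup (T ∩ Icc 0 t) ∈ T ∩ Icc 0 t := hT1c.csSup_mem hT1ne hT1bdd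
    have hT2ne : (T ∩ Icc t 1).Nonempty :=
      ⟨sSup T, hβT, ⟨by rw [hβ2C]; exact ht.2, (hTs hβT).2⟩⟩
    have hT2c : IsClosed (T ∩ Icc t 1) := hTclosed.inter isClosed_Icc
    have hT2bdd : BddBelow (T ∩ Icc t 1) := ⟨t, fun s hs => hs.2.1⟩
    have hbT : sInf (T ∩ Icc t 1) ∈ T ∩ Icc t 1 := hT2c.csInf_mem hT2ne hT2bdd
    have hat : sSup (T ∩ Icc 0 t) ≤ t := haT.2.2
    have htb : t ≤ sInf (T ∩ Icc t 1) := hbT.2.1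
    have hanet : sSup (T ∩ Icc 0 t) ≠ t := fun h => hFt (h ▸ haT.1.2)
    have hbnet : sInf (T ∩ Icc t 1) ≠ t := fun h => hFt (h ▸ hbT.1.2)
    have hab : sSup (T ∩ Icc 0 t) < sInf (T ∩ Icc t 1) :=
      lt_of_lt_of_le (lt_of_le_of_ne hat hanet) (lt_of_le_of_ne htb (Ne.symm hbnet)).le
    have hzero : ∀ᵐ s ∂(volume.restrict (Ioc (sSup (T ∩ Icc 0 t)) (sInf (T ∩ Icc t 1)))),
        f s = 0 := by
      filter_upwards [ae_restrict_mem measurableSet_Ioc, ae_restrict_of_ae hmemT,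
        ae_restrict_of_ae (ae_ne_const (sInf (T ∩ Icc t 1)))] with s hs hmem hsb
      by_contra hfs
      have hsT : s ∈ T := hmem hfs
      have hsble : s < sInf (T ∩ Icc t 1) := lt_of_le_of_ne hs.2 hsb
      rcases le_or_gt s t with hst | hst
      · have h5 : s ∈ T ∩ Icc 0 t := ⟨hsT, (hTs hsT).1, hst⟩
        have := le_csSup hT1bdd h5
        linarith [hs.1]
      · have h5 : s ∈ T ∩ Icc t 1 := ⟨hsT, hst.le, (hTs hsT).2⟩
        have := csInf_le hT2bdd h5
        linarith
    have hFab : Fint f (sInf (T ∩ Icc t 1)) = Fint f (sSup (T ∩ Icc 0 t)) := by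
      rw [hf.Fint_split (haT.1.1.1 : (0:ℝ) ≤ sSup (T ∩ Icc 0 t)) hab.le,
        integral_eq_zero_of_ae hzero, add_zero]
    have hFa := haT.1.2
    have hFb := hbT.1.2
    rw [hFa, hFb] at hFab
    nlinarith [hab, hl0]
  have hconc2 : ∀ᵐ x ∂(volume.restrict (Ioc (2*C) 1)), f x = 0 := by
    filter_upwards [ae_restrict_mem measurableSet_Ioc, ae_restrict_of_ae hmemT] with x hx hmem
    by_contra hfx
    have hxT : x ∈ T := hmem hfx
    have h6 : x ≤ sSup T := le_csSup hbddA hxT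
    rw [hβ2C] at h6
    linarith [hx.1]
  have hLeb := IsUnifLocDoublingMeasure.ae_tendsto_average_norm_sub (μ := volume)
    hf.integrable.locallyIntegrable 1
  have hFlin : ∀ t ∈ Icc (0:ℝ) (2*C), Fint f t = l * t / 2 := by
    intro t ht
    rw [hTmem t ht, hWl]; ring
  have hconc1 : ∀ᵐ x ∂(volume.restrict (Icc (0:ℝ) (2*C))), f x = l/2 := by
    filter_upwards [ae_restrict_mem measurableSet_Icc, ae_restrict_of_ae hLeb,
      ae_restrict_of_ae (ae_ne_const (0:ℝ)), ae_restrict_of_ae (ae_ne_const (2*C))]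
      with x hx hL h0 h2C
    have hx0 : 0 < x := lt_of_le_of_ne hx.1 (Ne.symm h0)
    have hx2 : x < 2*C := lt_of_le_of_ne hx.2 h2C
    have havg : Tendsto (fun ε : ℝ => ⨍ y in Metric.closedBall x ε, ‖f y - f x‖ ∂volume)
        (𝓝[>] 0) (𝓝 0) := by
      apply hL (fun _ => x) id tendsto_id
      filter_upwards [self_mem_nhdsWithin] with ε (hε : 0 < ε)
      simp only [Metric.mem_closedBall, dist_self, id_eq]
      linarith
    have key : ∀ ε, 0 < ε → ε ≤ 2*C - x →
        |l/2 - f x| ≤ 2 * ⨍ y in Metric.closedBall x ε, ‖f y - f x‖ ∂volume := by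
      intro ε hε hεle
      have hxin : x ∈ Icc (0:ℝ) (2*C) := ⟨hx0.le, hx2.le⟩
      have hxein : x + ε ∈ Icc (0:ℝ) (2*C) := ⟨by linarith, by linarith⟩
      have hIval : ∫ y in Ioc x (x+ε), f y = l * ε / 2 := by
        have hs := hf.Fint_split hx0.le (by linarith : x ≤ x + ε)
        rw [hFlin _ hxein, hFlin _ hxin] at hs
        linarith
      have hIocfin : volume (Ioc x (x+ε)) < ⊤ := by
        rw [Real.volume_Ioc]; exact ENNReal.ofReal_lt_top
      have hsub : ∫ y in Ioc x (x+ε), (f y - f x) = l * ε / 2 - f x * ε := by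
        rw [integral_sub hf.integrable.integrableOn (integrableOn_const hIocfin.ne),
          hIval, setIntegral_const, smul_eq_mul, Real.volume_real_Ioc_of_le (by linarith)]
        ring
      have habs : |l/2 - f x| * ε ≤ ∫ y in Ioc x (x+ε), ‖f y - f x‖ := by
        have h1 : |∫ y in Ioc x (x+ε), (f y - f x)| ≤ ∫ y in Ioc x (x+ε), ‖f y - f x‖ := by
          simpa [Real.norm_eq_abs] using
            norm_integral_le_integral_norm (μ := volume.restrict (Ioc x (x+ε)))
              (fun y => f y - f x)
        rw [hsub] at h1
        calc |l/2 - f x| * ε = |(l/2 - f x) * ε| := by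
              rw [abs_mul, abs_of_pos hε]
        _ = |l * ε / 2 - f x * ε| := by ring_nf
        _ ≤ _ := h1
      have hsubset : Ioc x (x+ε) ⊆ Metric.closedBall x ε := by
        intro y hy
        rw [Metric.mem_closedBall, Real.dist_eq, abs_le]
        exact ⟨by linarith [hy.1], by linarith [hy.2]⟩
      have hcbfin : volume (Metric.closedBall x ε) < ⊤ := by
        rw [Real.volume_closedBall]; exact ENNReal.ofReal_lt_top
      have hnormint : IntegrableOn (fun y => ‖f y - f x‖) (Metric.closedBall x ε) :=
        ((hf.integrable.integrableOn).sub (integrableOn_const hcbfin.ne)).norm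
      have hmono : (∫ y in Ioc x (x+ε), ‖f y - f x‖)
          ≤ ∫ y in Metric.closedBall x ε, ‖f y - f x‖ :=
        setIntegral_mono_set hnormint (ae_of_all _ (fun y => norm_nonneg _))
          (HasSubset.Subset.eventuallyLE hsubset)
      have hcb : (volume (Metric.closedBall x ε)).toReal = 2*ε := by
        rw [Real.volume_closedBall, ENNReal.toReal_ofReal (by linarith)]
      have havg_eq : (⨍ y in Metric.closedBall x ε, ‖f y - f x‖ ∂volume)
          = (2*ε)⁻¹ * ∫ y in Metric.closedBall x ε, ‖f y - f x‖ := by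
        rw [setAverage_eq, Real.volume_real_closedBall hε.le, smul_eq_mul]
      rw [havg_eq]
      have h9 : 2 * ((2*ε)⁻¹ * ∫ y in Metric.closedBall x ε, ‖f y - f x‖)
          = (∫ y in Metric.closedBall x ε, ‖f y - f x‖)/ε := by
        rw [eq_div_iff (ne_of_gt hε)]
        field_simp
      rw [h9, le_div_iff₀ hε]
      exact habs.trans hmono
    have hlim : Tendsto (fun ε : ℝ =>
        2 * ⨍ y in Metric.closedBall x ε, ‖f y - f x‖ ∂volume) (𝓝[>] 0) (𝓝 0) := by
      have h7 := havg.const_mul 2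
      simpa using h7
    have hfinal : |l/2 - f x| ≤ 0 := by
      apply ge_of_tendsto hlim
      filter_upwards [Ioc_mem_nhdsGT_of_mem
        (⟨le_refl (0:ℝ), by linarith⟩ : (0:ℝ) ∈ Ico 0 (2*C - x))] with ε hεm
      exact key ε hεm.1 hεm.2
    have h8 : l/2 - f x = 0 := abs_nonpos_iff.1 hfinal
    linarith
  exact ⟨l/2, by positivity, hconc1, hconc2⟩

theorem stmt12 (C : ℝ) (hC : C ∈ Ioo (0:ℝ) (1/2)) (f : ℝ → ℝ) (hf : IsStrategy f)
    (hsupp : Function.support f ⊆ Icc (0:ℝ) 1) (hmca : mca f ≤ C) :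
    (∀ g : ℝ → ℝ, IsStrategy g → Function.support g ⊆ Icc (0:ℝ) 1 → mca g ≤ C →
        0 ≤ wp f g) ↔
      ∃ a : ℝ, 0 < a ∧
        (∀ᵐ x ∂(volume.restrict (Icc (0:ℝ) (2*C))), f x = a) ∧
        (∀ᵐ x ∂(volume.restrict (Ioc (2*C) 1)), f x = 0) := by
  have hfNice : Nice f := ⟨hf.1, hf.2.2.1, hsupp, hf.2.1⟩
  constructor
  · intro Hyp
    exact forward_dir hC hfNice hf.2.2.2.2 hmca Hyp
  · rintro ⟨a, ha, h1, h2⟩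
    exact backward_dir hC hfNice ha h1 h2
end
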